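/- arXiv:1804.01642 — 6 statements merged into one kernel-verified Lean document; each statement's English description precedes it below -/
import Mathlib

section
/- Let Φ_K(t) = t(1 - (1 - 1/t)^K) for t > 0 and Φ_K(0) = 0 be the expected number of non-empty bins after throwing t balls uniformly and independently into K bins. Then for all integers 0 ≤ a ≤ b ≤ K/20, we have 0.9(b - a) ≤ Φ_K(b) - Φ_K(a) ≤ b - a. -/
lemma phi_aux_upper (q : ℝ) (hq0 : 0 ≤ q) (hq1 : q ≤ 1) (n : ℕ) :
    1 - q ^ n ≤ n * (1 - q) := by
  induction n with
  | zero => simp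
  | succ n ih =>
    have h1 : q ^ n ≤ 1 := pow_le_one₀ hq0 hq1
    have h2 : 1 - q ^ (n + 1) = (1 - q ^ n) + q ^ n * (1 - q) := by ring
    push_cast
    nlinarith

lemma phi_aux_lower (q : ℝ) (hq0 : 0 ≤ q) (hq1 : q ≤ 1) (n : ℕ) :
    (n : ℝ) * (1 - q) * q ^ n ≤ 1 - q ^ n := by
  induction n with
  | zero => simp
  | succ n ih =>
    have h1 : 0 ≤ q ^ n := pow_nonneg hq0 n
    have h2 : q ^ (n + 1) ≤ q ^ n := pow_le_pow_of_le_one hq0 hq1 (by omega)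
    have hnn : (0 : ℝ) ≤ ((n : ℝ) + 1) * (1 - q) :=
      mul_nonneg (by positivity) (by linarith)
    have h3 := mul_le_mul_of_nonneg_left h2 hnn
    have h4 : q ^ (n + 1) = q ^ n * q := pow_succ q n
    push_cast
    nlinarith

/-- Bi-Lipschitz property of the expected-occupancy function
`Φ_K(t) = K (1 - (1 - 1/K)^t)` on the range `[0, K/20]`. -/
theorem phi_biLipschitz (K : ℕ) (hK : 0 < K) (a b : ℕ) (hab : a ≤ b)
    (hb : (b : ℝ) ≤ (K : ℝ) / 20) :
    0.9 * ((b : ℝ) - (a : ℝ)) ≤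
        (K : ℝ) * (1 - (1 - 1 / (K : ℝ)) ^ b) - (K : ℝ) * (1 - (1 - 1 / (K : ℝ)) ^ a) ∧
      (K : ℝ) * (1 - (1 - 1 / (K : ℝ)) ^ b) - (K : ℝ) * (1 - (1 - 1 / (K : ℝ)) ^ a) ≤
        (b : ℝ) - (a : ℝ) := by
  set q : ℝ := 1 - 1 / (K : ℝ) with hqdef
  have hKpos : (0 : ℝ) < K := by exact_mod_cast hK
  have hKinv : 1 / (K : ℝ) ≤ 1 := by
    rw [div_le_one hKpos]; exact_mod_cast hK
  have hq0 : 0 ≤ q := by rw [hqdef]; linarith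
  have hq1 : q ≤ 1 := by
    have : 0 < 1 / (K : ℝ) := by positivity
    rw [hqdef]; linarith
  have hKq : (K : ℝ) * (1 - q) = 1 := by
    rw [hqdef, sub_sub_cancel, mul_one_div_cancel hKpos.ne']
  obtain ⟨n, rfl⟩ : ∃ n, b = a + n := ⟨b - a, (Nat.add_sub_cancel' hab).symm⟩
  have hPnn : 0 ≤ q ^ a := pow_nonneg hq0 a
  have hdiff : (K : ℝ) * (1 - q ^ (a + n)) - (K : ℝ) * (1 - q ^ a)
      = (K : ℝ) * (q ^ a * (1 - q ^ n)) := by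
    rw [pow_add]; ring
  have hcast : ((a + n : ℕ) : ℝ) - (a : ℝ) = (n : ℝ) := by push_cast; ring
  -- Bernoulli lower bound on q^(a+n)
  have hqb : (0.9 : ℝ) ≤ q ^ (a + n) := by
    have hbern := one_add_mul_le_pow (a := -(1 / (K : ℝ))) (by linarith) (a + n)
    have h1 : (1 : ℝ) + (a + n : ℕ) * (-(1 / (K : ℝ))) = 1 - ((a + n : ℕ) : ℝ) / K := by
      ring
    have h2 : ((a + n : ℕ) : ℝ) / K ≤ 1 / 20 := by
      rw [div_le_div_iff₀ hKpos (by norm_num)]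
      linarith
    have : (1 : ℝ) + (-(1 / (K : ℝ))) = q := by rw [hqdef]; ring
    rw [this] at hbern
    rw [h1] at hbern
    norm_num
    linarith
  constructor
  · -- lower bound
    rw [hdiff, hcast]
    have key : (n : ℝ) * q ^ (a + n) ≤ (K : ℝ) * (q ^ a * (1 - q ^ n)) := by
      have h := phi_aux_lower q hq0 hq1 n
      calc (n : ℝ) * q ^ (a + n)
          = ((K : ℝ) * (1 - q)) * ((n : ℝ) * q ^ (a + n)) := by rw [hKq]; ring
        _ = (K : ℝ) * (q ^ a * ((n : ℝ) * (1 - q) * q ^ n)) := by rw [pow_add]; ring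
        _ ≤ (K : ℝ) * (q ^ a * (1 - q ^ n)) := by
            apply mul_le_mul_of_nonneg_left _ hKpos.le
            exact mul_le_mul_of_nonneg_left h hPnn
    have hn0 : (0 : ℝ) ≤ n := Nat.cast_nonneg n
    nlinarith
  · -- upper bound
    rw [hdiff, hcast]
    have h := phi_aux_upper q hq0 hq1 n
    have hqa1 : q ^ a ≤ 1 := pow_le_one₀ hq0 hq1
    have h1n : 0 ≤ 1 - q ^ n := by
      have := pow_le_one₀ hq0 hq1 (n := n); linarith
    calc (K : ℝ) * (q ^ a * (1 - q ^ n))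
        ≤ (K : ℝ) * (1 * (1 - q ^ n)) := by
          apply mul_le_mul_of_nonneg_left _ hKpos.le
          exact mul_le_mul_of_nonneg_right hqa1 h1n
      _ = (K : ℝ) * (1 - q ^ n) := by ring
      _ ≤ (K : ℝ) * ((n : ℝ) * (1 - q)) := mul_le_mul_of_nonneg_left h hKpos.le
      _ = (n : ℝ) * ((K : ℝ) * (1 - q)) := by ring
      _ = (n : ℝ) := by rw [hKq]; ring
end

section
/- For every even p ≥ 2 there are constants C_p, C̃_p such that: if Z_1, …, Z_k are independent non-negative random variables with E[Z_i^s] ≤ μ_i for all 1 ≤ s ≤ p, and Σ_i μ_i ≥ 1, then ‖Σ_i Z_i‖_p ≤ C_p Σ_i μ_i and ‖Σ_i (Z_i - E Z_i)‖_p ≤ C̃_p √(Σ_i μ_i). -/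
open MeasureTheory ProbabilityTheory Real Finset

-- L1: factorization
lemma aux_integral_prod {Ω : Type} [MeasureSpace Ω] [IsProbabilityMeasure (ℙ : Measure Ω)] {k : ℕ}
    (Y : Fin k → Ω → ℝ) (hm : ∀ i, Measurable (Y i))
    (hind : iIndepFun Y ℙ)
    (hint : ∀ i, Integrable (Y i)) (S : Finset (Fin k)) :
    Integrable (fun ω => ∏ i ∈ S, Y i ω) ∧ (∫ ω, ∏ i ∈ S, Y i ω) = ∏ i ∈ S, ∫ ω, Y i ω := by
  classical
  induction S using Finset.cons_induction with
  | empty => simp [integrable_const]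
  | cons a S ha ih =>
    have hIF : IndepFun (∏ j ∈ S, Y j) (Y a) ℙ :=
      hind.indepFun_finsetProd_of_notMem hm ha
    have hPS : (fun ω => ∏ i ∈ S, Y i ω) = ∏ i ∈ S, Y i := by
      funext ω; simp
    have hint1 : Integrable (∏ j ∈ S, Y j) ℙ := by rw [← hPS]; exact ih.1
    have hmul : Integrable ((∏ j ∈ S, Y j) * Y a) ℙ := hIF.integrable_mul hint1 (hint a)
    constructor
    · have : (fun ω => ∏ i ∈ Finset.cons a S ha, Y i ω) = (∏ j ∈ S, Y j) * Y a := by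
        funext ω; simp [Finset.prod_cons, Finset.prod_apply, mul_comm, ha]
      rw [this]; exact hmul
    · have h2 := hIF.integral_mul_eq_mul_integral hint1.aestronglyMeasurable (hint a).aestronglyMeasurable
      have e1 : (∫ ω, ∏ i ∈ Finset.cons a S ha, Y i ω) = ∫ ω, ((∏ j ∈ S, Y j) * Y a) ω := by
        congr 1; funext ω; simp [Finset.prod_cons, Finset.prod_apply, mul_comm, ha]
      rw [e1, h2, Finset.prod_cons, ← hPS, ih.2, mul_comm]


lemma aux_jensen_pow {Ω : Type} [MeasureSpace Ω] [IsProbabilityMeasure (ℙ : Measure Ω)]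
    (Z : Ω → ℝ) (hZ0 : ∀ ω, 0 ≤ Z ω) (m : ℕ)
    (hint1 : Integrable Z) (hintm : Integrable (fun ω => Z ω ^ m)) :
    (∫ ω, Z ω) ^ m ≤ ∫ ω, Z ω ^ m := by
  have := (convexOn_pow (𝕜 := ℝ) m).map_integral_le (μ := (ℙ : Measure Ω)) (f := Z)
    ((continuous_pow m).continuousOn) isClosed_Ici
    (Filter.Eventually.of_forall fun ω => hZ0 ω) hint1 ?_
  · exact this
  · exact hintm

lemma aux_centered_moment {Ω : Type} [MeasureSpace Ω] [IsProbabilityMeasure (ℙ : Measure Ω)]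
    (Z : Ω → ℝ) (hZm : Measurable Z) (hZ0 : ∀ ω, 0 ≤ Z ω) (μi : ℝ) (p : ℕ)
    (hint : ∀ s : ℕ, s ≤ p → Integrable (fun ω => Z ω ^ s))
    (hmom : ∀ s : ℕ, 1 ≤ s → s ≤ p → (∫ ω, Z ω ^ s) ≤ μi)
    (m : ℕ) (hm1 : 1 ≤ m) (hmp : m ≤ p) :
    Integrable (fun ω => (Z ω - ∫ ω', Z ω') ^ m) ∧
      |∫ ω, (Z ω - ∫ ω', Z ω') ^ m| ≤ 2 ^ m * μi := by
  have hp0 : 0 < p := lt_of_lt_of_le hm1 hmp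
  set c : ℝ := ∫ ω', Z ω' with hc
  have hint1 : Integrable Z := by simpa using hint 1 (le_trans hm1 hmp)
  have hc0 : 0 ≤ c := integral_nonneg hZ0
  have hcm : c ^ m ≤ μi := by
    calc c ^ m ≤ ∫ ω, Z ω ^ m := aux_jensen_pow Z hZ0 m hint1 (hint m hmp)
    _ ≤ μi := hmom m hm1 hmp
  have hg : Integrable (fun ω => (2:ℝ) ^ (m-1) * (Z ω ^ m + c ^ m)) := by
    exact (((hint m hmp).add (integrable_const _)).const_mul _)
  have hptw : ∀ ω, |(Z ω - c) ^ m| ≤ 2 ^ (m-1) * (Z ω ^ m + c ^ m) := by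
    intro ω
    have h1 : |(Z ω - c) ^ m| = |Z ω - c| ^ m := by rw [abs_pow]
    have h2 : |Z ω - c| ≤ Z ω + c := by
      have := abs_sub (Z ω) c
      calc |Z ω - c| ≤ |Z ω| + |c| := abs_sub _ _
        _ = Z ω + c := by rw [abs_of_nonneg (hZ0 ω), abs_of_nonneg hc0]
    calc |(Z ω - c) ^ m| = |Z ω - c| ^ m := by rw [abs_pow]
      _ ≤ (Z ω + c) ^ m := pow_le_pow_left₀ (abs_nonneg _) h2 m
      _ ≤ 2 ^ (m-1) * (Z ω ^ m + c ^ m) := add_pow_le (hZ0 ω) hc0 m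
  have hYint : Integrable (fun ω => (Z ω - c) ^ m) := by
    refine Integrable.mono' hg ?_ (Filter.Eventually.of_forall hptw)
    exact ((hZm.sub measurable_const).pow_const m).aestronglyMeasurable
  refine ⟨hYint, ?_⟩
  calc |∫ ω, (Z ω - c) ^ m| ≤ ∫ ω, |(Z ω - c) ^ m| := by
        simpa [Real.norm_eq_abs] using
          norm_integral_le_integral_norm (μ := (ℙ : Measure Ω)) (fun ω => (Z ω - c) ^ m)
    _ ≤ ∫ ω, 2 ^ (m-1) * (Z ω ^ m + c ^ m) := by
        refine integral_mono_of_nonneg (Filter.Eventually.of_forall fun ω => abs_nonneg _)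
          hg (Filter.Eventually.of_forall hptw)
    _ = 2 ^ (m-1) * ((∫ ω, Z ω ^ m) + c ^ m) := by
        rw [integral_const_mul, integral_add (hint m hmp) (integrable_const _), integral_const]
        simp
    _ ≤ 2 ^ (m-1) * (μi + μi) := by
        have := hmom m hm1 hmp
        have h2 : (0:ℝ) ≤ 2 ^ (m-1) := by positivity
        nlinarith [hcm]
    _ = 2 ^ (m-1) * 2 * μi := by ring
    _ ≤ 2 ^ m * μi := by
        have : (2:ℝ) ^ (m-1) * 2 = 2 ^ (m - 1 + 1) := by ring
        rw [this]
        rw [Nat.sub_add_cancel hm1]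


variable {p k : ℕ}

noncomputable def parF (f : Fin p → Fin k) (j : Fin p) : Fin p :=
  (Finset.univ.filter fun j' => f j' = f j).min' ⟨j, by simp⟩

lemma parF_apply_eq (f : Fin p → Fin k) (j : Fin p) : f (parF f j) = f j := by
  have := Finset.min'_mem (Finset.univ.filter fun j' => f j' = f j) ⟨j, by simp⟩
  simpa [parF] using (Finset.mem_filter.mp this).2

lemma min'_congr {α : Type*} [LinearOrder α] (s t : Finset α) (hs : s.Nonempty)
    (ht : t.Nonempty) (h : s = t) : s.min' hs = t.min' ht := by
  subst h; rfl

lemma parF_idem (f : Fin p → Fin k) (j : Fin p) : parF f (parF f j) = parF f j := by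
  have hfib : (Finset.univ.filter fun j' => f j' = f (parF f j)) =
      (Finset.univ.filter fun j' => f j' = f j) := by
    ext j'; simp [parF_apply_eq]
  exact min'_congr _ _ _ _ hfib

lemma parF_eq_of_eq (f : Fin p → Fin k) {j₁ j₂ : Fin p} (h : f j₁ = f j₂) :
    parF f j₁ = parF f j₂ := by
  refine min'_congr _ _ _ _ ?_
  ext j'; simp [h]

noncomputable def repF (f : Fin p → Fin k) : Finset (Fin p) :=
  Finset.univ.filter fun j => parF f j = j

lemma repF_injOn (f : Fin p → Fin k) : Set.InjOn f (repF f) := by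
  intro j₁ h₁ j₂ h₂ h
  have e₁ : parF f j₁ = j₁ := (Finset.mem_filter.mp h₁).2
  have e₂ : parF f j₂ = j₂ := (Finset.mem_filter.mp h₂).2
  rw [← e₁, ← e₂, parF_eq_of_eq f h]

lemma repF_image (f : Fin p → Fin k) :
    Finset.image f (repF f) = Finset.image f Finset.univ := by
  apply Finset.Subset.antisymm (Finset.image_subset_image (Finset.subset_univ _))
  intro i hi
  obtain ⟨j, _, rfl⟩ := Finset.mem_image.mp hi
  refine Finset.mem_image.mpr ⟨parF f j, ?_, parF_apply_eq f j⟩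
  simp [repF, parF_idem]

lemma repF_card (f : Fin p → Fin k) :
    (repF f).card = (Finset.image f Finset.univ).card := by
  rw [← repF_image, Finset.card_image_of_injOn (repF_injOn f)]

lemma prodF (f : Fin p → Fin k) (μ : Fin k → ℝ) :
    ∏ i ∈ Finset.image f Finset.univ, μ i = ∏ j ∈ repF f, μ (f j) := by
  rw [← repF_image, Finset.prod_image (fun a ha b hb h => repF_injOn f ha hb h)]

lemma aux_comb (hk : 0 < k) (μ : Fin k → ℝ) (hμ0 : ∀ i, 0 ≤ μ i)
    (hM : 1 ≤ ∑ i, μ i) (q : ℕ) (s : Finset (Fin p → Fin k))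
    (hs : ∀ f ∈ s, (Finset.image f Finset.univ).card ≤ q) :
    ∑ f ∈ s, ∏ i ∈ Finset.image f Finset.univ, μ i
      ≤ ((p ^ p : ℕ) : ℝ) * (∑ i, μ i) ^ q := by
  classical
  set M := ∑ i, μ i with hMdef
  have hM0 : (0:ℝ) < M := lt_of_lt_of_le one_pos hM
  set i0 : Fin k := ⟨0, hk⟩
  set Φ : (Fin p → Fin k) → (Fin p → Fin p) × (Fin p → Fin k) :=
    fun f => (parF f, fun j => if parF f j = j then f j else i0) with hΦ
  have hrec : ∀ f j, (Φ f).2 ((Φ f).1 j) = f j := by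
    intro f j
    simp only [hΦ, parF_idem, if_true, parF_apply_eq]
  have hinj : Function.Injective Φ := by
    intro f₁ f₂ h
    funext j
    rw [← hrec f₁ j, ← hrec f₂ j, h]
  set w : (Fin p → Fin p) × (Fin p → Fin k) → ℝ :=
    fun e => ∏ j ∈ Finset.univ.filter (fun j => e.1 j = j), μ (e.2 j) with hw
  have step1 : ∀ f, ∏ i ∈ Finset.image f Finset.univ, μ i = w (Φ f) := by
    intro f
    rw [prodF f μ]
    refine (Finset.prod_congr rfl fun j hj => ?_).symm
    have : parF f j = j := (Finset.mem_filter.mp hj).2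
    simp [hΦ, this]
  set T : Finset ((Fin p → Fin p) × (Fin p → Fin k)) :=
    Finset.univ.filter fun e =>
      (Finset.univ.filter fun j => e.1 j = j).card ≤ q ∧ ∀ j, e.1 j ≠ j → e.2 j = i0 with hT
  have step3 : s.image Φ ⊆ T := by
    intro y hy
    obtain ⟨f, hf, rfl⟩ := Finset.mem_image.mp hy
    refine Finset.mem_filter.mpr ⟨Finset.mem_univ _, ?_, ?_⟩
    · have : (Finset.univ.filter fun j => (Φ f).1 j = j) = repF f := rfl
      rw [this, repF_card]
      exact hs f hf
    · intro j hj
      simp [hΦ] at hj ⊢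
      intro h; exact absurd h hj
  calc ∑ f ∈ s, ∏ i ∈ Finset.image f Finset.univ, μ i
      = ∑ f ∈ s, w (Φ f) := Finset.sum_congr rfl fun f _ => step1 f
    _ = ∑ y ∈ s.image Φ, w y := (Finset.sum_image fun a _ b _ h => hinj h).symm
    _ ≤ ∑ y ∈ T, w y := by
        refine Finset.sum_le_sum_of_subset_of_nonneg step3 fun y _ _ => ?_
        exact Finset.prod_nonneg fun j _ => hμ0 _
    _ ≤ ((p ^ p : ℕ) : ℝ) * M ^ q := by
        rw [hT, Finset.sum_filter, ← Finset.univ_product_univ, Finset.sum_product]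
        have hbound : ∀ e1 : Fin p → Fin p,
            (∑ e2 : Fin p → Fin k, if ((Finset.univ.filter fun j => e1 j = j).card ≤ q ∧
              ∀ j, e1 j ≠ j → e2 j = i0) then w (e1, e2) else 0) ≤ M ^ q := by
          intro e1
          by_cases hR : (Finset.univ.filter fun j => e1 j = j).card ≤ q
          · have : ∀ e2 : Fin p → Fin k,
                (if ((Finset.univ.filter fun j => e1 j = j).card ≤ q ∧
                  ∀ j, e1 j ≠ j → e2 j = i0) then w (e1, e2) else 0)
                = if (∀ j, e1 j ≠ j → e2 j = i0) then w (e1, e2) else 0 := by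
              intro e2; simp [hR]
            simp only [this]
            rw [← Finset.sum_filter]
            have hpi : (Finset.univ.filter fun e2 : Fin p → Fin k => ∀ j, e1 j ≠ j → e2 j = i0)
                = Fintype.piFinset (fun j => if e1 j = j then (Finset.univ : Finset (Fin k)) else {i0}) := by
              ext e2
              simp only [Finset.mem_filter, Finset.mem_univ, true_and, Fintype.mem_piFinset]
              constructor
              · intro h j
                by_cases hj : e1 j = j
                · simp [hj]
                · simp [hj, h j hj]
              · intro h j hj
                have := h j
                simp [hj] at this
                exact this
            rw [hpi]
            have hwe : ∀ e2 : Fin p → Fin k, w (e1, e2)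
                = ∏ j : Fin p, (if e1 j = j then μ (e2 j) else 1) := by
              intro e2
              rw [hw]
              simp only
              rw [Finset.prod_filter]
            simp only [hwe]
            have := Finset.prod_univ_sum (fun j => if e1 j = j then (Finset.univ : Finset (Fin k)) else {i0})
              (fun j i => if e1 j = j then μ i else 1)
            rw [← this]
            have : ∀ j : Fin p, (∑ i ∈ (if e1 j = j then (Finset.univ : Finset (Fin k)) else {i0}),
                (if e1 j = j then μ i else 1)) = (if e1 j = j then M else 1) := by
              intro j
              by_cases hj : e1 j = j <;> simp [hj, hMdef]
            rw [Finset.prod_congr rfl fun j _ => this j]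
            rw [Finset.prod_ite, Finset.prod_const, Finset.prod_const, one_pow, mul_one]
            exact pow_le_pow_right₀ hM hR
          · have : ∀ e2 : Fin p → Fin k,
                (if ((Finset.univ.filter fun j => e1 j = j).card ≤ q ∧
                  ∀ j, e1 j ≠ j → e2 j = i0) then w (e1, e2) else 0) = 0 := by
              intro e2; simp [hR]
            simp only [this, Finset.sum_const_zero]
            positivity
        calc (∑ e1 : Fin p → Fin p, ∑ e2 : Fin p → Fin k,
              if ((Finset.univ.filter fun j => e1 j = j).card ≤ q ∧
                ∀ j, e1 j ≠ j → e2 j = i0) then w (e1, e2) else 0)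
            ≤ ∑ _e1 : Fin p → Fin p, M ^ q := Finset.sum_le_sum fun e1 _ => hbound e1
          _ = ((p ^ p : ℕ) : ℝ) * M ^ q := by
              rw [Finset.sum_const, Finset.card_univ]
              simp [Fintype.card_fun, nsmul_eq_mul]


lemma aux_rpow_end (p : ℕ) (hp0 : 0 < p) {I D : ℝ} (hI0 : 0 ≤ I) (hD : 0 ≤ D)
    (h : I ≤ D ^ p) : I ^ (1/(p:ℝ)) ≤ D := by
  have hpne : (p:ℝ) ≠ 0 := Nat.cast_ne_zero.mpr hp0.ne'
  have h1 : I ^ (1/(p:ℝ)) ≤ (D ^ p) ^ (1/(p:ℝ)) :=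
    Real.rpow_le_rpow hI0 h (by positivity)
  calc I ^ (1/(p:ℝ)) ≤ (D ^ p) ^ (1/(p:ℝ)) := h1
    _ = D := by
      rw [← Real.rpow_natCast D p, ← Real.rpow_mul hD, mul_one_div_cancel hpne, Real.rpow_one]

lemma aux_pow_le_one_add (x : ℝ) (hx : 0 ≤ x) {m p : ℕ} (h : m ≤ p) : x ^ m ≤ 1 + x ^ p := by
  rcases le_total x 1 with h1 | h1
  · have := pow_le_one₀ hx h1 (n := m)
    nlinarith [pow_nonneg hx p]
  · have := pow_le_pow_right₀ h1 h
    nlinarith [pow_nonneg hx m]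

section main
variable {Ω : Type} [MeasureSpace Ω] [IsProbabilityMeasure (ℙ : Measure Ω)] {k p : ℕ}

-- number of j with f j = i
def mF (f : Fin p → Fin k) (i : Fin k) : ℕ := (Finset.univ.filter fun j => f j = i).card

lemma mF_le (f : Fin p → Fin k) (i : Fin k) : mF f i ≤ p := by
  calc mF f i ≤ (Finset.univ : Finset (Fin p)).card := Finset.card_filter_le _ _
    _ = p := by simp

lemma mF_ge (f : Fin p → Fin k) {i : Fin k} (hi : i ∈ Finset.image f Finset.univ) :
    1 ≤ mF f i := by
  obtain ⟨j, _, rfl⟩ := Finset.mem_image.mp hi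
  exact Finset.card_pos.mpr ⟨j, by simp⟩

lemma mF_sum (f : Fin p → Fin k) : ∑ i ∈ Finset.image f Finset.univ, mF f i = p := by
  have := Finset.card_eq_sum_card_fiberwise
    (fun j (_ : j ∈ (Finset.univ : Finset (Fin p))) => Finset.mem_image_of_mem f (Finset.mem_univ j))
  simpa [mF] using this.symm

lemma aux_expand (W : Fin k → Ω → ℝ) (ω : Ω) (p : ℕ) :
    (∑ i, W i ω) ^ p = ∑ f : Fin p → Fin k, ∏ i ∈ Finset.image f Finset.univ, W i ω ^ mF f i := by
  classical
  rw [Finset.sum_pow']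
  rw [Fintype.piFinset_univ]
  exact Finset.sum_congr rfl fun f _ => Finset.prod_comp (fun i => W i ω) f

end main


/-- For independent non-negative random variables with all moments up to order `p`
bounded by `μ_i`, and `Σ μ_i ≥ 1`, one has `‖Σ Z_i‖_p ≤ C_p Σ μ_i` and
`‖Σ (Z_i - E Z_i)‖_p ≤ C̃_p √(Σ μ_i)`. -/
theorem indep_moment_sum_bounds (p : ℕ) (hpeven : Even p) (hp : 2 ≤ p) :
    ∃ Cp Ctp : ℝ, 0 < Cp ∧ 0 < Ctp ∧
      ∀ (Ω : Type) (_ : MeasureSpace Ω) (_ : IsProbabilityMeasure (ℙ : Measure Ω))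
        (k : ℕ) (Z : Fin k → Ω → ℝ) (μ' : Fin k → ℝ),
        (∀ i, Measurable (Z i)) →
        (∀ i ω, 0 ≤ Z i ω) →
        iIndepFun Z ℙ →
        (∀ i, ∀ s : ℕ, 1 ≤ s → s ≤ p → ∫ ω, (Z i ω) ^ s ≤ μ' i) →
        1 ≤ ∑ i, μ' i →
        (∫ ω, |∑ i, Z i ω| ^ p) ^ (1 / (p : ℝ)) ≤ Cp * ∑ i, μ' i ∧
        (∫ ω, |∑ i, (Z i ω - ∫ ω', Z i ω')| ^ p) ^ (1 / (p : ℝ)) ≤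
          Ctp * Real.sqrt (∑ i, μ' i) := by
  classical
  have hp0 : 0 < p := by omega
  have hpR : (0:ℝ) < p := Nat.cast_pos.mpr hp0
  refine ⟨(p:ℝ), 2^p * (p:ℝ), hpR, mul_pos (by positivity) hpR, ?_⟩
  intro Ω _ _ k Z μ' hmeas hZ0 hind hmom hM
  simp only [hpeven.pow_abs]
  have hμ0 : ∀ i, 0 ≤ μ' i := fun i =>
    le_trans (integral_nonneg fun ω => pow_nonneg (hZ0 i ω) 1) (hmom i 1 le_rfl (by omega))
  set M := ∑ i, μ' i with hMdef
  have hM0 : (0:ℝ) < M := lt_of_lt_of_le one_pos hM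
  have hk : 0 < k := by
    rcases Nat.eq_zero_or_pos k with rfl | h
    · rw [hMdef] at hM0; simp at hM0
    · exact h
  have hsqrtM : 1 ≤ Real.sqrt M := by
    rw [show (1:ℝ) = Real.sqrt 1 by simp]
    exact Real.sqrt_le_sqrt hM
  set c : Fin k → ℝ := fun i => ∫ ω', Z i ω' with hc
  have hc0 : ∀ i, 0 ≤ c i := fun i => integral_nonneg (hZ0 i)
  by_cases hA : Integrable (fun ω => (∑ i, Z i ω) ^ p) ℙ
  swap
  · -- degenerate case: the p-th moment is not integrable, both integrals are zero
    have hB : ¬ Integrable (fun ω => (∑ i, (Z i ω - c i)) ^ p) ℙ := by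
      intro hB
      apply hA
      set C : ℝ := ∑ i, c i with hC
      have hC0 : 0 ≤ C := Finset.sum_nonneg fun i _ => hc0 i
      have hg : Integrable (fun ω => 2^(p-1) * ((∑ i, (Z i ω - c i))^p + C^p)) ℙ :=
        ((hB.add (integrable_const _)).const_mul _)
      refine Integrable.mono' hg ?_ (Filter.Eventually.of_forall fun ω => ?_)
      · exact ((Finset.measurable_sum Finset.univ fun i _ => hmeas i).pow_const p).aestronglyMeasurable
      · have hsum : (∑ i, Z i ω) = (∑ i, (Z i ω - c i)) + C := by
          rw [hC, ← Finset.sum_add_distrib]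
          exact Finset.sum_congr rfl fun i _ => by ring
        calc |(∑ i, Z i ω) ^ p| = |∑ i, Z i ω| ^ p := abs_pow _ _
          _ = |(∑ i, (Z i ω - c i)) + C| ^ p := by rw [hsum]
          _ ≤ (|∑ i, (Z i ω - c i)| + C) ^ p := by
              refine pow_le_pow_left₀ (abs_nonneg _) ?_ p
              calc |(∑ i, (Z i ω - c i)) + C| ≤ |∑ i, (Z i ω - c i)| + |C| := abs_add_le _ _
                _ = |∑ i, (Z i ω - c i)| + C := by rw [abs_of_nonneg hC0]
          _ ≤ 2^(p-1) * (|∑ i, (Z i ω - c i)|^p + C^p) := add_pow_le (abs_nonneg _) hC0 p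
          _ = 2^(p-1) * ((∑ i, (Z i ω - c i))^p + C^p) := by rw [hpeven.pow_abs]
    constructor
    · rw [integral_undef hA, Real.zero_rpow (by positivity)]
      exact le_of_lt (mul_pos hpR hM0)
    · rw [integral_undef hB, Real.zero_rpow (by positivity)]
      exact le_of_lt (mul_pos (by positivity) (lt_of_lt_of_le one_pos hsqrtM))
  · -- main case
    have hZs : ∀ i, ∀ s, s ≤ p → Integrable (fun ω => Z i ω ^ s) ℙ := by
      intro i s hs
      have hgi : Integrable (fun ω => 1 + (∑ i', Z i' ω)^p) ℙ := (integrable_const 1).add hA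
      refine Integrable.mono' hgi ((hmeas i).pow_const s).aestronglyMeasurable
        (Filter.Eventually.of_forall fun ω => ?_)
      have h1 : Z i ω ≤ ∑ i', Z i' ω :=
        Finset.single_le_sum (fun i' _ => hZ0 i' ω) (Finset.mem_univ i)
      calc |Z i ω ^ s| = Z i ω ^ s := abs_of_nonneg (pow_nonneg (hZ0 i ω) s)
        _ ≤ (∑ i', Z i' ω) ^ s := pow_le_pow_left₀ (hZ0 i ω) h1 s
        _ ≤ 1 + (∑ i', Z i' ω) ^ p :=
            aux_pow_le_one_add _ (Finset.sum_nonneg fun i' _ => hZ0 i' ω) hs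
    -- PART 1
    have part1 : ∫ ω, (∑ i, Z i ω)^p ≤ ((p:ℝ) * M)^p := by
      have hfact : ∀ f : Fin p → Fin k,
          Integrable (fun ω => ∏ i ∈ Finset.image f Finset.univ, Z i ω ^ mF f i) ℙ ∧
          (∫ ω, ∏ i ∈ Finset.image f Finset.univ, Z i ω ^ mF f i)
            = ∏ i ∈ Finset.image f Finset.univ, ∫ ω, Z i ω ^ mF f i := by
        intro f
        have hindf : iIndepFun (fun i (ω:Ω) => Z i ω ^ mF f i) ℙ :=
          hind.comp (fun i => fun x : ℝ => x ^ mF f i) (fun i => measurable_id.pow_const _)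
        exact aux_integral_prod _ (fun i => (hmeas i).pow_const _) hindf
          (fun i => hZs i _ (mF_le f i)) _
      have h1 : ∫ ω, (∑ i, Z i ω)^p
          = ∑ f : Fin p → Fin k, ∏ i ∈ Finset.image f Finset.univ, ∫ ω, Z i ω ^ mF f i := by
        calc ∫ ω, (∑ i, Z i ω)^p
            = ∫ ω, ∑ f : Fin p → Fin k, ∏ i ∈ Finset.image f Finset.univ, Z i ω ^ mF f i := by
              congr 1; funext ω; exact aux_expand Z ω p
          _ = ∑ f : Fin p → Fin k, ∫ ω, ∏ i ∈ Finset.image f Finset.univ, Z i ω ^ mF f i :=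
              integral_finset_sum _ (fun f _ => (hfact f).1)
          _ = _ := Finset.sum_congr rfl fun f _ => (hfact f).2
      rw [h1]
      calc ∑ f : Fin p → Fin k, ∏ i ∈ Finset.image f Finset.univ, ∫ ω, Z i ω ^ mF f i
          ≤ ∑ f : Fin p → Fin k, ∏ i ∈ Finset.image f Finset.univ, μ' i := by
            refine Finset.sum_le_sum fun f _ => Finset.prod_le_prod
              (fun i _ => integral_nonneg fun ω => pow_nonneg (hZ0 i ω) _)
              (fun i hi => hmom i _ (mF_ge f hi) (mF_le f i))
        _ ≤ ((p ^ p : ℕ) : ℝ) * M ^ p := by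
            refine aux_comb hk μ' hμ0 hM p Finset.univ fun f _ => ?_
            calc (Finset.image f Finset.univ).card ≤ (Finset.univ : Finset (Fin p)).card :=
                  Finset.card_image_le
              _ = p := by simp
        _ = ((p:ℝ) * M)^p := by rw [mul_pow, Nat.cast_pow]
    -- PART 2
    have hcent : ∀ i, ∀ m, 1 ≤ m → m ≤ p →
        Integrable (fun ω => (Z i ω - c i)^m) ℙ ∧ |∫ ω, (Z i ω - c i)^m| ≤ 2^m * μ' i :=
      fun i m h1 h2 => aux_centered_moment (Z i) (hmeas i) (hZ0 i) (μ' i) p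
        (fun s hs => hZs i s hs) (fun s hs1 hs2 => hmom i s hs1 hs2) m h1 h2
    have hYs : ∀ i, ∀ m, m ≤ p → Integrable (fun ω => (Z i ω - c i)^m) ℙ := by
      intro i m hm
      rcases Nat.eq_zero_or_pos m with rfl | h1
      · simpa using integrable_const (1:ℝ)
      · exact (hcent i m h1 hm).1
    have hfact2 : ∀ f : Fin p → Fin k,
        Integrable (fun ω => ∏ i ∈ Finset.image f Finset.univ, (Z i ω - c i) ^ mF f i) ℙ ∧
        (∫ ω, ∏ i ∈ Finset.image f Finset.univ, (Z i ω - c i) ^ mF f i)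
          = ∏ i ∈ Finset.image f Finset.univ, ∫ ω, (Z i ω - c i) ^ mF f i := by
      intro f
      have hindf : iIndepFun
          (fun i (ω:Ω) => (Z i ω - c i) ^ mF f i) ℙ :=
        hind.comp (fun i => fun x : ℝ => (x - c i) ^ mF f i)
          (fun i => (measurable_id.sub_const _).pow_const _)
      exact aux_integral_prod _ (fun i => ((hmeas i).sub_const _).pow_const _) hindf
        (fun i => hYs i _ (mF_le f i)) _
    have h2 : ∫ ω, (∑ i, (Z i ω - c i))^p
        = ∑ f : Fin p → Fin k, ∏ i ∈ Finset.image f Finset.univ, ∫ ω, (Z i ω - c i) ^ mF f i := by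
      calc ∫ ω, (∑ i, (Z i ω - c i))^p
          = ∫ ω, ∑ f : Fin p → Fin k, ∏ i ∈ Finset.image f Finset.univ, (Z i ω - c i) ^ mF f i := by
            congr 1; funext ω; exact aux_expand (fun i ω => Z i ω - c i) ω p
        _ = ∑ f : Fin p → Fin k, ∫ ω, ∏ i ∈ Finset.image f Finset.univ, (Z i ω - c i) ^ mF f i :=
            integral_finset_sum _ (fun f _ => (hfact2 f).1)
        _ = _ := Finset.sum_congr rfl fun f _ => (hfact2 f).2
    set T : (Fin p → Fin k) → ℝ :=
      fun f => ∏ i ∈ Finset.image f Finset.univ, ∫ ω, (Z i ω - c i) ^ mF f i with hT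
    have hker : ∀ f : Fin p → Fin k, T f ≠ 0 → ∀ i ∈ Finset.image f Finset.univ, 2 ≤ mF f i := by
      intro f hf i hi
      by_contra hlt
      have h1 : mF f i = 1 := by have := mF_ge f hi; omega
      apply hf
      refine Finset.prod_eq_zero hi ?_
      rw [h1]
      have hZ1 : Integrable (Z i) ℙ := by simpa using hZs i 1 (by omega)
      simp only [pow_one]
      rw [integral_sub hZ1 (integrable_const _), integral_const]
      simp [hc]
    have hgoodcard : ∀ f : Fin p → Fin k, (∀ i ∈ Finset.image f Finset.univ, 2 ≤ mF f i) →
        (Finset.image f Finset.univ).card ≤ p / 2 := by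
      intro f hgood
      rw [Nat.le_div_iff_mul_le two_pos]
      have h1 : (Finset.image f Finset.univ).card • 2 ≤ ∑ i ∈ Finset.image f Finset.univ, mF f i :=
        Finset.card_nsmul_le_sum _ _ _ hgood
      rw [mF_sum f] at h1
      simpa [smul_eq_mul] using h1
    have part2 : ∫ ω, (∑ i, (Z i ω - c i))^p ≤ ((2:ℝ)^p * (p:ℝ) * Real.sqrt M)^p := by
      rw [h2]
      have hsplit : ∑ f : Fin p → Fin k, T f
          = ∑ f ∈ Finset.univ.filter (fun f => ∀ i ∈ Finset.image f Finset.univ, 2 ≤ mF f i), T f :=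
        (Finset.sum_filter_of_ne fun f _ hf => hker f hf).symm
      have hMhalf : M^(p/2) = Real.sqrt M ^ p := by
        obtain ⟨r, hr⟩ := hpeven
        have hp2 : p / 2 = r := by omega
        rw [hp2, hr, show r + r = 2 * r by ring, pow_mul, Real.sq_sqrt hM0.le]
      calc ∑ f : Fin p → Fin k, T f
          = ∑ f ∈ Finset.univ.filter (fun f => ∀ i ∈ Finset.image f Finset.univ, 2 ≤ mF f i), T f :=
            hsplit
        _ ≤ |∑ f ∈ Finset.univ.filter (fun f => ∀ i ∈ Finset.image f Finset.univ, 2 ≤ mF f i), T f| :=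
            le_abs_self _
        _ ≤ ∑ f ∈ Finset.univ.filter (fun f => ∀ i ∈ Finset.image f Finset.univ, 2 ≤ mF f i), |T f| :=
            Finset.abs_sum_le_sum_abs _ _
        _ ≤ ∑ f ∈ Finset.univ.filter (fun f => ∀ i ∈ Finset.image f Finset.univ, 2 ≤ mF f i),
              ((2:ℝ)^p)^p * ∏ i ∈ Finset.image f Finset.univ, μ' i := by
            refine Finset.sum_le_sum fun f hf => ?_
            have hgood := (Finset.mem_filter.mp hf).2
            calc |T f| = ∏ i ∈ Finset.image f Finset.univ, |∫ ω, (Z i ω - c i) ^ mF f i| := by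
                  rw [hT]; exact Finset.abs_prod _ _
              _ ≤ ∏ i ∈ Finset.image f Finset.univ, ((2:ℝ)^p * μ' i) := by
                  refine Finset.prod_le_prod (fun i _ => abs_nonneg _) (fun i hi => ?_)
                  calc |∫ ω, (Z i ω - c i) ^ mF f i| ≤ 2^(mF f i) * μ' i :=
                        (hcent i (mF f i) (mF_ge f hi) (mF_le f i)).2
                    _ ≤ 2^p * μ' i :=
                        mul_le_mul_of_nonneg_right
                          (pow_le_pow_right₀ one_le_two (mF_le f i)) (hμ0 i)
              _ = ((2:ℝ)^p)^((Finset.image f Finset.univ).card)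
                    * ∏ i ∈ Finset.image f Finset.univ, μ' i := by
                  rw [Finset.prod_mul_distrib, Finset.prod_const]
              _ ≤ ((2:ℝ)^p)^p * ∏ i ∈ Finset.image f Finset.univ, μ' i := by
                  refine mul_le_mul_of_nonneg_right
                    (pow_le_pow_right₀ (one_le_pow₀ one_le_two) ?_)
                    (Finset.prod_nonneg fun i _ => hμ0 i)
                  calc (Finset.image f Finset.univ).card
                      ≤ (Finset.univ : Finset (Fin p)).card := Finset.card_image_le
                    _ = p := by simp
        _ = ((2:ℝ)^p)^p * ∑ f ∈ Finset.univ.filter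
              (fun f => ∀ i ∈ Finset.image f Finset.univ, 2 ≤ mF f i),
              ∏ i ∈ Finset.image f Finset.univ, μ' i := by rw [Finset.mul_sum]
        _ ≤ ((2:ℝ)^p)^p * (((p ^ p : ℕ) : ℝ) * M ^ (p/2)) := by
            refine mul_le_mul_of_nonneg_left ?_ (by positivity)
            exact aux_comb hk μ' hμ0 hM (p/2) _
              (fun f hf => hgoodcard f (Finset.mem_filter.mp hf).2)
        _ = ((2:ℝ)^p * (p:ℝ) * Real.sqrt M)^p := by
            rw [hMhalf, mul_pow, mul_pow, Nat.cast_pow]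
            ring
    constructor
    · exact aux_rpow_end p hp0
        (integral_nonneg fun ω => pow_nonneg (Finset.sum_nonneg fun i _ => hZ0 i ω) p)
        (le_of_lt (mul_pos hpR hM0)) part1
    · exact aux_rpow_end p hp0
        (integral_nonneg fun ω => hpeven.pow_nonneg _)
        (by positivity) part2
end

section
/- Let Z_1, …, Z_k be p-wise independent non-negative random variables satisfying P(Z_i > λ) ≤ μ_i e^{-λ} for all λ ≥ 0, with Σ μ_i ≥ 1. Then there are a universal constant K and a constant C̃_p depending only on p such that for all λ > K, P(Σ_i Z_i > λ Σ_i μ_i) ≤ λ^{-p} (C̃_p / Σ_i μ_i)^{p/2}. -/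
open MeasureTheory ProbabilityTheory Real
open scoped ProbabilityTheory

/-- A finite family of random variables is `p`-wise independent. -/
def PWiseIndep {Ω : Type*} [MeasureSpace Ω] {k : ℕ} (p : ℕ) (Z : Fin k → Ω → ℝ) : Prop :=
  ∀ s : Finset (Fin k), s.card ≤ p →
    iIndepFun (fun i : s => Z i) ℙ

section AuxiliaryLemmas
variable {Ω : Type} [MeasureSpace Ω] [IsProbabilityMeasure (ℙ : Measure Ω)]

lemma tail_lintegral (W : Ω → ℝ) (ν : ℝ) (hW : Measurable W) (hWnn : ∀ ω, 0 ≤ W ω)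
    (htail : ∀ l : ℝ, 0 ≤ l → (ℙ {ω | l < W ω}).toReal ≤ ν * Real.exp (-l))
    (s : ℕ) (hs : 1 ≤ s) :
    ∫⁻ ω, ENNReal.ofReal (W ω ^ s) ≤ ENNReal.ofReal (ν * (Nat.factorial s : ℝ)) := by
  have hν : 0 ≤ ν := by
    have h0 := htail 0 le_rfl
    simp only [neg_zero, Real.exp_zero, mul_one] at h0
    exact le_trans ENNReal.toReal_nonneg h0
  have hs0 : (s : ℝ) ≠ 0 := by positivity
  have hlc := lintegral_comp_eq_lintegral_meas_lt_mul (ℙ : Measure Ω) (f := W)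
      (g := fun t => (s : ℝ) * t ^ (s - 1)) (Filter.Eventually.of_forall hWnn)
      hW.aemeasurable
      (fun t _ => (intervalIntegral.intervalIntegrable_pow (s-1)).const_mul _)
      ((ae_restrict_iff' measurableSet_Ioi).2 (Filter.Eventually.of_forall
        (fun t (ht : t ∈ Set.Ioi (0:ℝ)) => by
          have ht' : (0:ℝ) < t := ht; positivity)))
  have hprim : ∀ ω, (∫ t in (0:ℝ)..W ω, (s:ℝ) * t ^ (s-1)) = W ω ^ s := by
    intro ω
    rw [intervalIntegral.integral_const_mul, integral_pow]
    rw [Nat.sub_add_cancel hs, zero_pow (by omega), sub_zero]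
    field_simp
    rw [Nat.cast_sub hs]; push_cast; ring
  rw [show (fun ω => ENNReal.ofReal (W ω ^ s))
      = fun ω => ENNReal.ofReal (∫ t in (0:ℝ)..W ω, (s:ℝ) * t ^ (s-1)) by
    funext ω; rw [hprim ω]]
  rw [hlc]
  -- the dominating integrand
  set Fb : ℝ → ℝ := fun t => (ν * Real.exp (-t)) * ((s:ℝ) * t ^ (s-1)) with hFb
  have hcongr : Set.EqOn (fun t : ℝ => (ν * (s:ℝ)) * (Real.exp (-t) * t ^ ((s:ℝ) - 1))) Fb
      (Set.Ioi 0) := by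
    intro t ht
    have ht0 : (0:ℝ) < t := ht
    have : t ^ ((s:ℝ) - 1) = t ^ (s - 1 : ℕ) := by
      rw [← Real.rpow_natCast t (s-1)]
      congr 1
      rw [Nat.cast_sub hs]
      simp
    simp only [Fb, this]
    ring
  have hGint : IntegrableOn (fun t : ℝ => Real.exp (-t) * t ^ ((s:ℝ) - 1)) (Set.Ioi 0) :=
    Real.GammaIntegral_convergent (by positivity)
  have hbint : IntegrableOn Fb (Set.Ioi 0) := by
    exact IntegrableOn.congr_fun (hGint.const_mul (ν * (s:ℝ))) hcongr measurableSet_Ioi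
  have hGval : ∫ t in Set.Ioi (0:ℝ), Real.exp (-t) * t ^ ((s:ℝ) - 1)
      = ((s-1).factorial : ℝ) := by
    rw [← Real.Gamma_eq_integral (by positivity : (0:ℝ) < s)]
    have : ((s:ℝ)) = ((s-1 : ℕ) : ℝ) + 1 := by
      rw [Nat.cast_sub hs]; simp
    rw [this, Real.Gamma_nat_eq_factorial]
  have hbval : ∫ t in Set.Ioi (0:ℝ), Fb t = ν * (Nat.factorial s : ℝ) := by
    rw [← setIntegral_congr_fun measurableSet_Ioi hcongr]
    rw [integral_const_mul, hGval]
    rw [show (Nat.factorial s : ℝ) = (s : ℝ) * ((s-1).factorial : ℝ) by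
      rw [← Nat.cast_mul]
      congr 1
      rw [← Nat.succ_pred_eq_of_pos (by omega : 0 < s)]
      simp [Nat.factorial_succ]]
    ring
  have hb_nn : ∀ t ∈ Set.Ioi (0:ℝ), 0 ≤ Fb t := by
    intro t ht
    have ht0 : (0:ℝ) < t := ht
    have : 0 ≤ Real.exp (-t) := (Real.exp_pos _).le
    positivity
  calc ∫⁻ t in Set.Ioi 0, ℙ {a | t < W a} * ENNReal.ofReal ((s:ℝ) * t ^ (s-1))
      ≤ ∫⁻ t in Set.Ioi 0, ENNReal.ofReal (Fb t) := by
        refine setLIntegral_mono (by fun_prop) ?_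
        intro t ht
        have ht0 : (0:ℝ) < t := ht
        have h1 : ℙ {a | t < W a} ≤ ENNReal.ofReal (ν * Real.exp (-t)) := by
          rw [← ENNReal.ofReal_toReal (measure_ne_top ℙ _)]
          exact ENNReal.ofReal_le_ofReal (htail t ht0.le)
        calc ℙ {a | t < W a} * ENNReal.ofReal ((s:ℝ) * t ^ (s-1))
            ≤ ENNReal.ofReal (ν * Real.exp (-t)) * ENNReal.ofReal ((s:ℝ) * t ^ (s-1)) :=
              mul_le_mul_left h1 _
          _ = ENNReal.ofReal (Fb t) := by
              rw [← ENNReal.ofReal_mul (by positivity)]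
    _ = ENNReal.ofReal (ν * (Nat.factorial s : ℝ)) := by
        rw [← ofReal_integral_eq_lintegral_ofReal hbint
          ((ae_restrict_iff' measurableSet_Ioi).2 (Filter.Eventually.of_forall hb_nn)), hbval]

lemma tail_moment (W : Ω → ℝ) (ν : ℝ) (hW : Measurable W) (hWnn : ∀ ω, 0 ≤ W ω)
    (htail : ∀ l : ℝ, 0 ≤ l → (ℙ {ω | l < W ω}).toReal ≤ ν * Real.exp (-l))
    (s : ℕ) (hs : 1 ≤ s) :
    Integrable (fun ω => W ω ^ s) ℙ ∧ ∫ ω, W ω ^ s ≤ (Nat.factorial s : ℝ) * ν := by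
  have hν : 0 ≤ ν := by
    have h0 := htail 0 le_rfl
    simp only [neg_zero, Real.exp_zero, mul_one] at h0
    exact le_trans ENNReal.toReal_nonneg h0
  have key := tail_lintegral W ν hW hWnn htail s hs
  have hnn : ∀ ω, 0 ≤ W ω ^ s := fun ω => pow_nonneg (hWnn ω) s
  have hint : Integrable (fun ω => W ω ^ s) ℙ := by
    refine ⟨(hW.pow_const s).aestronglyMeasurable, ?_⟩
    rw [hasFiniteIntegral_iff_norm]
    calc ∫⁻ ω, ENNReal.ofReal ‖W ω ^ s‖ ∂ℙ = ∫⁻ ω, ENNReal.ofReal (W ω ^ s) ∂ℙ := by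
          congr 1; funext ω; rw [Real.norm_of_nonneg (hnn ω)]
      _ ≤ ENNReal.ofReal (ν * (Nat.factorial s : ℝ)) := key
      _ < ⊤ := ENNReal.ofReal_lt_top
  refine ⟨hint, ?_⟩
  rw [integral_eq_lintegral_of_nonneg_ae (Filter.Eventually.of_forall hnn)
    (hW.pow_const s).aestronglyMeasurable]
  calc (∫⁻ ω, ENNReal.ofReal (W ω ^ s) ∂ℙ).toReal
      ≤ (ENNReal.ofReal (ν * (Nat.factorial s : ℝ))).toReal :=
        ENNReal.toReal_mono ENNReal.ofReal_ne_top key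
    _ = ν * (Nat.factorial s : ℝ) := ENNReal.toReal_ofReal (by positivity)
    _ = (Nat.factorial s : ℝ) * ν := mul_comm _ _


lemma tail_integrable (W : Ω → ℝ) (ν : ℝ) (hW : Measurable W) (hWnn : ∀ ω, 0 ≤ W ω)
    (htail : ∀ l : ℝ, 0 ≤ l → (ℙ {ω | l < W ω}).toReal ≤ ν * Real.exp (-l)) :
    Integrable W ℙ ∧ ∫ ω, W ω ≤ ν := by
  have h := tail_moment W ν hW hWnn htail 1 le_rfl
  simpa using h

lemma tail_mean_le_log (W : Ω → ℝ) (ν : ℝ) (hW : Measurable W) (hWnn : ∀ ω, 0 ≤ W ω)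
    (htail : ∀ l : ℝ, 0 ≤ l → (ℙ {ω | l < W ω}).toReal ≤ ν * Real.exp (-l))
    (hν1 : 1 ≤ ν) :
    ∫ ω, W ω ≤ Real.log ν + 1 := by
  have hν0 : (0:ℝ) < ν := lt_of_lt_of_le one_pos hν1
  set c : ℝ := Real.log ν with hc
  have hc0 : 0 ≤ c := Real.log_nonneg hν1
  set V : Ω → ℝ := fun ω => max (W ω - c) 0 with hV
  have hVmeas : Measurable V := (hW.sub measurable_const).max measurable_const
  have hVnn : ∀ ω, 0 ≤ V ω := fun ω => le_max_right _ _
  have hVtail : ∀ l : ℝ, 0 ≤ l → (ℙ {ω | l < V ω}).toReal ≤ 1 * Real.exp (-l) := by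
    intro l hl
    have hset : {ω | l < V ω} = {ω | c + l < W ω} := by
      ext ω
      simp only [Set.mem_setOf_eq, hV, lt_max_iff]
      constructor
      · rintro (h | h)
        · linarith
        · linarith
      · intro h; left; linarith
    rw [hset]
    have := htail (c + l) (by linarith)
    calc (ℙ {ω | c + l < W ω}).toReal ≤ ν * Real.exp (-(c + l)) := this
      _ = 1 * Real.exp (-l) := by
          rw [neg_add, Real.exp_add, Real.exp_neg, hc, Real.exp_log hν0]
          field_simp
  have hVint := tail_integrable V 1 hVmeas hVnn hVtail
  have hWint := (tail_integrable W ν hW hWnn htail).1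
  have hle : ∀ ω, W ω ≤ c + V ω := by
    intro ω
    have : W ω - c ≤ V ω := le_max_left _ _
    linarith
  calc ∫ ω, W ω ≤ ∫ ω, (c + V ω) :=
        integral_mono hWint ((integrable_const c).add hVint.1) hle
    _ = c + ∫ ω, V ω := by
        rw [integral_add (integrable_const c) hVint.1, integral_const]
        simp
    _ ≤ c + 1 := by have := hVint.2; linarith

lemma mean_pow_le (p : ℕ) (hp : 2 ≤ p) (W : Ω → ℝ) (ν : ℝ) (hW : Measurable W)
    (hWnn : ∀ ω, 0 ≤ W ω)
    (htail : ∀ l : ℝ, 0 ≤ l → (ℙ {ω | l < W ω}).toReal ≤ ν * Real.exp (-l))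
    (a : ℕ) (ha1 : 1 ≤ a) (hap : a ≤ p) :
    (∫ ω, W ω) ^ a ≤ (2*(p:ℝ))^p * ν := by
  have hν : 0 ≤ ν := by
    have h0 := htail 0 le_rfl
    simp only [neg_zero, Real.exp_zero, mul_one] at h0
    exact le_trans ENNReal.toReal_nonneg h0
  set c : ℝ := ∫ ω, W ω with hc
  have hc0 : 0 ≤ c := integral_nonneg hWnn
  have hcν : c ≤ ν := (tail_integrable W ν hW hWnn htail).2
  have h2p : (1:ℝ) ≤ 2*(p:ℝ) := by
    have : (2:ℝ) ≤ (p:ℝ) := by exact_mod_cast hp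
    linarith
  have h2pp : (1:ℝ) ≤ (2*(p:ℝ))^p := one_le_pow₀ h2p
  rcases le_or_gt ν 1 with hν1 | hν1
  · calc c ^ a ≤ c ^ 1 := pow_le_pow_of_le_one hc0 (le_trans hcν hν1) ha1
      _ = c := pow_one c
      _ ≤ ν := hcν
      _ ≤ (2*(p:ℝ))^p * ν := le_mul_of_one_le_left hν h2pp
  · -- ν ≥ 1
    have hν1' : (1:ℝ) ≤ ν := hν1.le
    have hν0 : (0:ℝ) < ν := lt_of_lt_of_le one_pos hν1'
    set u : ℝ := 1 / (2*(p:ℝ)) with hu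
    have hu0 : 0 < u := by positivity
    have hrpos : 0 < ν ^ u := Real.rpow_pos_of_pos hν0 u
    have hr1 : 1 ≤ ν ^ u := Real.one_le_rpow hν1' hu0.le
    have hlog : Real.log ν ≤ 2*(p:ℝ) * (ν ^ u - 1) := by
      have h1 : Real.log (ν ^ u) ≤ ν ^ u - 1 := Real.log_le_sub_one_of_pos hrpos
      rw [Real.log_rpow hν0] at h1
      have : Real.log ν = (2*(p:ℝ)) * (u * Real.log ν) := by
        rw [hu]; field_simp
      rw [this]
      apply mul_le_mul_of_nonneg_left h1 (by positivity)
    have hcb : c ≤ 2*(p:ℝ) * ν ^ u := by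
      have h1 : c ≤ Real.log ν + 1 := tail_mean_le_log W ν hW hWnn htail hν1'
      calc c ≤ Real.log ν + 1 := h1
        _ ≤ 2*(p:ℝ) * (ν ^ u - 1) + 1 := by linarith
        _ = 2*(p:ℝ) * ν ^ u - (2*(p:ℝ) - 1) := by ring
        _ ≤ 2*(p:ℝ) * ν ^ u := by linarith
    calc c ^ a ≤ (2*(p:ℝ) * ν ^ u) ^ a := pow_le_pow_left₀ hc0 hcb a
      _ = (2*(p:ℝ))^a * (ν ^ u) ^ a := mul_pow _ _ _
      _ ≤ (2*(p:ℝ))^p * (ν ^ u) ^ a := by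
          apply mul_le_mul_of_nonneg_right (pow_le_pow_right₀ h2p hap)
          positivity
      _ ≤ (2*(p:ℝ))^p * ν := by
          apply mul_le_mul_of_nonneg_left ?_ (by positivity)
          have h1 : (ν ^ u) ^ a = ν ^ (u * (a:ℝ)) := by
            rw [← Real.rpow_natCast (ν ^ u) a, ← Real.rpow_mul hν0.le]
          rw [h1]
          calc ν ^ (u * (a:ℝ)) ≤ ν ^ (1:ℝ) := by
                apply Real.rpow_le_rpow_of_exponent_le hν1'
                rw [hu]
                rw [div_mul_eq_mul_div, one_mul, div_le_one (by positivity)]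
                have : (a:ℝ) ≤ (p:ℝ) := by exact_mod_cast hap
                linarith
            _ = ν := Real.rpow_one ν

lemma centered_moment (p : ℕ) (hp : 2 ≤ p) (W : Ω → ℝ) (ν : ℝ) (hW : Measurable W)
    (hWnn : ∀ ω, 0 ≤ W ω)
    (htail : ∀ l : ℝ, 0 ≤ l → (ℙ {ω | l < W ω}).toReal ≤ ν * Real.exp (-l))
    (a : ℕ) (ha1 : 1 ≤ a) (hap : a ≤ p) :
    Integrable (fun ω => (W ω - ∫ ω', W ω') ^ a) ℙ ∧
      |∫ ω, (W ω - ∫ ω', W ω') ^ a| ≤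
        (2:ℝ)^p * ((Nat.factorial p : ℝ) + (2*(p:ℝ))^p) * ν := by
  have hν : 0 ≤ ν := by
    have h0 := htail 0 le_rfl
    simp only [neg_zero, Real.exp_zero, mul_one] at h0
    exact le_trans ENNReal.toReal_nonneg h0
  set c : ℝ := ∫ ω', W ω' with hc
  have hc0 : 0 ≤ c := integral_nonneg hWnn
  have hWa := tail_moment W ν hW hWnn htail a ha1
  set B : Ω → ℝ := fun ω => (2:ℝ)^p * (W ω ^ a + c ^ a) with hB
  have hBint : Integrable B ℙ := (hWa.1.add (integrable_const _)).const_mul _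
  have hbound : ∀ ω, |(W ω - c) ^ a| ≤ B ω := by
    intro ω
    have h1 : |(W ω - c) ^ a| = |W ω - c| ^ a := by rw [abs_pow]
    have h2 : |W ω - c| ≤ W ω + c := by
      rw [abs_sub_le_iff]; constructor <;> [linarith [hWnn ω]; linarith [hWnn ω]]
    have h3 : |W ω - c| ^ a ≤ (W ω + c) ^ a := pow_le_pow_left₀ (abs_nonneg _) h2 a
    have h4 : (W ω + c) ^ a ≤ 2^(a-1) * (W ω ^ a + c ^ a) := add_pow_le (hWnn ω) hc0 a
    have h5 : (2:ℝ)^(a-1) ≤ 2^p := pow_le_pow_right₀ one_le_two (by omega)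
    have h6 : (0:ℝ) ≤ W ω ^ a + c ^ a :=
      add_nonneg (pow_nonneg (hWnn ω) a) (pow_nonneg hc0 a)
    calc |(W ω - c) ^ a| = |W ω - c| ^ a := h1
      _ ≤ (W ω + c) ^ a := h3
      _ ≤ 2^(a-1) * (W ω ^ a + c ^ a) := h4
      _ ≤ 2^p * (W ω ^ a + c ^ a) := mul_le_mul_of_nonneg_right h5 h6
  have hmeas : AEStronglyMeasurable (fun ω => (W ω - c) ^ a) ℙ :=
    ((hW.sub measurable_const).pow_const a).aestronglyMeasurable
  have hint : Integrable (fun ω => (W ω - c) ^ a) ℙ := by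
    refine hBint.mono' hmeas (Filter.Eventually.of_forall ?_)
    intro ω
    rw [Real.norm_eq_abs]
    exact hbound ω
  refine ⟨hint, ?_⟩
  have hca : c ^ a ≤ (2*(p:ℝ))^p * ν := mean_pow_le p hp W ν hW hWnn htail a ha1 hap
  have hfact : (Nat.factorial a : ℝ) ≤ (Nat.factorial p : ℝ) := by
    exact_mod_cast Nat.factorial_le hap
  calc |∫ ω, (W ω - c) ^ a| ≤ ∫ ω, |(W ω - c) ^ a| := by
        have := norm_integral_le_integral_norm (μ := (ℙ : Measure Ω))
          (fun ω => (W ω - c) ^ a)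
        simpa [Real.norm_eq_abs] using this
    _ ≤ ∫ ω, B ω := integral_mono hint.abs hBint hbound
    _ = (2:ℝ)^p * ((∫ ω, W ω ^ a) + c ^ a) := by
        simp only [hB]
        rw [integral_const_mul, integral_add hWa.1 (integrable_const _), integral_const]
        simp
    _ ≤ (2:ℝ)^p * ((Nat.factorial p : ℝ) * ν + (2*(p:ℝ))^p * ν) := by
        have h1 := hWa.2
        have : (∫ ω, W ω ^ a) + c ^ a ≤ (Nat.factorial p : ℝ) * ν + (2*(p:ℝ))^p * ν := by
          have : (∫ ω, W ω ^ a) ≤ (Nat.factorial p : ℝ) * ν := by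
            calc (∫ ω, W ω ^ a) ≤ (Nat.factorial a : ℝ) * ν := h1
              _ ≤ (Nat.factorial p : ℝ) * ν := mul_le_mul_of_nonneg_right hfact hν
          linarith [hca]
        exact mul_le_mul_of_nonneg_left this (by positivity)
    _ = (2:ℝ)^p * ((Nat.factorial p : ℝ) + (2*(p:ℝ))^p) * ν := by ring

lemma indep_prod_integral {ι : Type*} (f : ι → Ω → ℝ)
    (hmeas : ∀ i, Measurable (f i)) (hint : ∀ i, Integrable (f i) ℙ)
    (hindep : iIndepFun f ℙ)
    (s : Finset ι) :
    Integrable (fun ω => ∏ i ∈ s, f i ω) ℙ ∧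
      ∫ ω, ∏ i ∈ s, f i ω = ∏ i ∈ s, ∫ ω, f i ω := by
  classical
  induction s using Finset.induction_on with
  | empty =>
    constructor
    · simpa using integrable_const (1:ℝ)
    · simp
  | @insert a s ha ih =>
    have hIF : IndepFun (∏ j ∈ s, f j) (f a) ℙ :=
      iIndepFun.indepFun_finsetProd_of_notMem hindep hmeas ha
    have hprod_eq : (∏ j ∈ s, f j) = fun ω => ∏ j ∈ s, f j ω := by
      funext ω; exact Finset.prod_apply ω s f
    have hsint : Integrable (∏ j ∈ s, f j) ℙ := by rw [hprod_eq]; exact ih.1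
    have hmul : Integrable ((∏ j ∈ s, f j) * f a) ℙ := hIF.integrable_mul hsint (hint a)
    have hval : ∫ ω, ((∏ j ∈ s, f j) * f a) ω = (∫ ω, (∏ j ∈ s, f j) ω) * ∫ ω, f a ω :=
      hIF.integral_mul_eq_mul_integral hsint.aestronglyMeasurable (hint a).aestronglyMeasurable
    have heq : (fun ω => ∏ i ∈ insert a s, f i ω) = ((∏ j ∈ s, f j) * f a) := by
      funext ω
      rw [Finset.prod_insert ha, Pi.mul_apply, Finset.prod_apply, mul_comm]
    constructor
    · rw [heq]; exact hmul
    · calc ∫ ω, ∏ i ∈ insert a s, f i ω = ∫ ω, ((∏ j ∈ s, f j) * f a) ω := by rw [heq]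
        _ = (∫ ω, (∏ j ∈ s, f j) ω) * ∫ ω, f a ω := hval
        _ = (∏ i ∈ s, ∫ ω, f i ω) * ∫ ω, f a ω := by
            simp only [Finset.prod_apply]
            rw [ih.2]
        _ = ∏ i ∈ insert a s, ∫ ω, f i ω := by rw [Finset.prod_insert ha, mul_comm]

lemma sum_powersetCard_prod_le {k : ℕ} (μ : Fin k → ℝ) (hμ : ∀ i, 0 ≤ μ i) (m : ℕ) :
    ∑ T ∈ Finset.powersetCard m (Finset.univ : Finset (Fin k)), ∏ i ∈ T, μ i
      ≤ (∑ i, μ i) ^ m := by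
  classical
  set P := Finset.powersetCard m (Finset.univ : Finset (Fin k)) with hP
  rcases P.eq_empty_or_nonempty with hPe | hPne
  · rw [hPe]
    simp only [Finset.sum_empty]
    exact pow_nonneg (Finset.sum_nonneg fun i _ => hμ i) m
  have hmk : m ≤ k := by
    obtain ⟨T, hT⟩ := hPne
    rw [hP, Finset.mem_powersetCard] at hT
    calc m = T.card := hT.2.symm
      _ ≤ (Finset.univ : Finset (Fin k)).card := Finset.card_le_card hT.1
      _ = k := by simp
  set ι : Finset (Fin k) → (Fin m → Fin k) := fun T =>
    if h : T.card = m then ⇑(T.orderEmbOfFin h) else fun j => Fin.castLE hmk j with hι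
  have hcard : ∀ T ∈ P, T.card = m := by
    intro T hT; rw [hP, Finset.mem_powersetCard] at hT; exact hT.2
  have hιT : ∀ (T) (hT : T ∈ P), ι T = ⇑(T.orderEmbOfFin (hcard T hT)) := by
    intro T hT
    simp only [hι]
    exact dif_pos (hcard T hT)
  have himage : ∀ T ∈ P, Finset.image (ι T) Finset.univ = T := by
    intro T hT
    apply Finset.coe_injective
    rw [Finset.coe_image, Finset.coe_univ, Set.image_univ, hιT T hT]
    exact Finset.range_orderEmbOfFin T (hcard T hT)
  have hinj : ∀ (T) (hT : T ∈ P), Function.Injective (ι T) := by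
    intro T hT
    rw [hιT T hT]
    exact (T.orderEmbOfFin (hcard T hT)).injective
  have hval : ∀ T ∈ P, ∏ i ∈ T, μ i = ∏ j : Fin m, μ (ι T j) := by
    intro T hT
    calc ∏ i ∈ T, μ i = ∏ i ∈ Finset.image (ι T) Finset.univ, μ i := by rw [himage T hT]
      _ = ∏ j : Fin m, μ (ι T j) :=
          Finset.prod_image (fun x _ y _ hxy => hinj T hT hxy)
  have hinjOn : Set.InjOn ι P := by
    intro T hT T' hT' h
    have h1 := himage T hT
    have h2 := himage T' hT'
    rw [← h1, ← h2, h]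
  calc ∑ T ∈ P, ∏ i ∈ T, μ i = ∑ T ∈ P, ∏ j : Fin m, μ (ι T j) :=
        Finset.sum_congr rfl hval
    _ = ∑ g ∈ P.image ι, ∏ j : Fin m, μ (g j) := by
        rw [Finset.sum_image (fun x hx y hy h => hinjOn hx hy h)]
    _ ≤ ∑ g : Fin m → Fin k, ∏ j : Fin m, μ (g j) := by
        apply Finset.sum_le_sum_of_subset_of_nonneg (Finset.subset_univ _)
        intro g _ _
        exact Finset.prod_nonneg fun j _ => hμ (g j)
    _ = (∑ i, μ i) ^ m := by
        rw [← Fintype.piFinset_univ, ← Finset.prod_univ_sum]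
        simp

lemma moment_bound (p h : ℕ) (hp : 2 ≤ p) (hph : p = 2*h)
    (k : ℕ) (Z : Fin k → Ω → ℝ) (μ' : Fin k → ℝ)
    (hmeas : ∀ i, Measurable (Z i)) (hnn : ∀ i ω, 0 ≤ Z i ω)
    (hindep : PWiseIndep p Z)
    (htail : ∀ i, ∀ l : ℝ, 0 ≤ l → (ℙ {ω | l < Z i ω}).toReal ≤ μ' i * Real.exp (-l))
    (hS : 1 ≤ ∑ i, μ' i) :
    Integrable (fun ω => (∑ i, (Z i ω - ∫ ω', Z i ω')) ^ p) ℙ ∧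
      ∫ ω, (∑ i, (Z i ω - ∫ ω', Z i ω')) ^ p ≤
        ((2:ℝ)^p * ((Nat.factorial p : ℝ) + (2*(p:ℝ))^p))^p * (h:ℝ)^p * ((h:ℝ)+1)
          * (∑ i, μ' i)^h := by
  classical
  have hμnn : ∀ i, 0 ≤ μ' i := by
    intro i
    have h0 := htail i 0 le_rfl
    simp only [neg_zero, Real.exp_zero, mul_one] at h0
    exact le_trans ENNReal.toReal_nonneg h0
  set S : ℝ := ∑ i, μ' i with hSdef
  set D : ℝ := (2:ℝ)^p * ((Nat.factorial p : ℝ) + (2*(p:ℝ))^p) with hD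
  have hD1 : (1:ℝ) ≤ D := by
    rw [hD]
    have h1 : (1:ℝ) ≤ (2:ℝ)^p := one_le_pow₀ one_le_two
    have h2 : (1:ℝ) ≤ (Nat.factorial p : ℝ) + (2*(p:ℝ))^p := by
      have : (1:ℝ) ≤ (Nat.factorial p : ℝ) := by exact_mod_cast Nat.one_le_iff_ne_zero.2 (Nat.factorial_ne_zero p)
      have h3 : (0:ℝ) ≤ (2*(p:ℝ))^p := by positivity
      linarith
    calc (1:ℝ) = 1 * 1 := by ring
      _ ≤ (2:ℝ)^p * ((Nat.factorial p : ℝ) + (2*(p:ℝ))^p) := mul_le_mul h1 h2 one_pos.le (by positivity)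
  set c : Fin k → ℝ := fun i => ∫ ω', Z i ω' with hcdef
  set Y : Fin k → Ω → ℝ := fun i ω => Z i ω - c i with hYdef
  -- basic facts
  have hYmeas : ∀ i, Measurable (Y i) := fun i => (hmeas i).sub measurable_const
  have hYint : ∀ (i) (a : ℕ), 1 ≤ a → a ≤ p → Integrable (fun ω => Y i ω ^ a) ℙ :=
    fun i a h1 h2 => (centered_moment p hp (Z i) (μ' i) (hmeas i) (hnn i) (htail i) a h1 h2).1
  have hYbdd : ∀ (i) (a : ℕ), 1 ≤ a → a ≤ p → |∫ ω, Y i ω ^ a| ≤ D * μ' i :=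
    fun i a h1 h2 => (centered_moment p hp (Z i) (μ' i) (hmeas i) (hnn i) (htail i) a h1 h2).2
  have hY0 : ∀ i, ∫ ω, Y i ω = 0 := by
    intro i
    have hZint := (tail_integrable (Z i) (μ' i) (hmeas i) (hnn i) (htail i)).1
    rw [hYdef]
    simp only
    rw [integral_sub hZint (integrable_const _), integral_const]
    simp [hcdef]
  -- notation for image and multiplicities
  set T : (Fin p → Fin k) → Finset (Fin k) := fun g => Finset.image g Finset.univ with hTdef
  set m : (Fin p → Fin k) → Fin k → ℕ :=
    fun g i => (Finset.filter (fun j => g j = i) Finset.univ).card with hmdef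
  have hm1 : ∀ g i, i ∈ T g → 1 ≤ m g i := by
    intro g i hi
    rw [hTdef] at hi
    obtain ⟨j, _, hj⟩ := Finset.mem_image.1 hi
    rw [hmdef]
    have : j ∈ Finset.filter (fun j => g j = i) Finset.univ := by
      simp [hj]
    exact Finset.card_pos.2 ⟨j, this⟩
  have hmp : ∀ g i, m g i ≤ p := by
    intro g i
    rw [hmdef]
    calc (Finset.filter (fun j => g j = i) Finset.univ).card
        ≤ (Finset.univ : Finset (Fin p)).card := Finset.card_le_card (Finset.filter_subset _ _)
      _ = p := by simp
  have hTcard : ∀ g, (T g).card ≤ p := by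
    intro g
    rw [hTdef]
    calc (Finset.image g Finset.univ).card ≤ (Finset.univ : Finset (Fin p)).card :=
          Finset.card_image_le
      _ = p := by simp
  -- expansion
  have hexp : ∀ ω, (∑ i, Y i ω) ^ p = ∑ g : Fin p → Fin k, ∏ j, Y (g j) ω := by
    intro ω
    calc (∑ i, Y i ω) ^ p = ∏ _j : Fin p, (∑ i, Y i ω) := by
          rw [Finset.prod_const]; simp
      _ = ∑ g ∈ Fintype.piFinset (fun _ : Fin p => (Finset.univ : Finset (Fin k))),
            ∏ j, Y (g j) ω := Finset.prod_univ_sum _ _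
      _ = ∑ g : Fin p → Fin k, ∏ j, Y (g j) ω := by rw [Fintype.piFinset_univ]
  -- factorization for each g
  have hfact : ∀ g : Fin p → Fin k,
      Integrable (fun ω => ∏ j, Y (g j) ω) ℙ ∧
        ∫ ω, ∏ j, Y (g j) ω = ∏ i ∈ T g, ∫ ω, Y i ω ^ (m g i) := by
    intro g
    have hI := hindep (T g) (hTcard g)
    set φ : Fin k → ℝ → ℝ := fun i x => (x - c i) ^ (m g i) with hφ
    have hφmeas : ∀ i : T g, Measurable (φ i) :=
      fun i => (measurable_id.sub measurable_const).pow_const _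
    have hI2 : iIndepFun
        (fun i : T g => (φ i) ∘ (Z i)) ℙ := hI.comp _ hφmeas
    have hint2 : ∀ i : T g, Integrable ((φ i) ∘ (Z i)) ℙ := by
      intro i
      have := hYint i (m g i.1) (hm1 g i.1 i.2) (hmp g i.1)
      exact this
    have hmeas2 : ∀ i : T g, Measurable ((φ i) ∘ (Z i)) :=
      fun i => (hφmeas i).comp (hmeas i)
    have hkey := indep_prod_integral (fun i : T g => (φ i) ∘ (Z i)) hmeas2 hint2 hI2
      Finset.univ
    have hpoint : ∀ ω, (∏ j, Y (g j) ω) = ∏ i : T g, ((φ i) ∘ (Z i)) ω := by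
      intro ω
      rw [Finset.prod_coe_sort (T g) (fun i => ((φ i) ∘ (Z i)) ω)]
      have h1 : (∏ j, Y (g j) ω) = ∏ i ∈ T g, (Y i ω) ^ (m g i) := by
        rw [hTdef, hmdef]
        exact Finset.prod_comp (fun i => Y i ω) g
      rw [h1]
      apply Finset.prod_congr rfl
      intro i _
      rfl
    constructor
    · have := hkey.1
      refine this.congr (Filter.Eventually.of_forall ?_)
      intro ω
      exact (hpoint ω).symm
    · calc ∫ ω, ∏ j, Y (g j) ω = ∫ ω, ∏ i : T g, ((φ i) ∘ (Z i)) ω :=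
            integral_congr_ae (Filter.Eventually.of_forall hpoint)
        _ = ∏ i : T g, ∫ ω, ((φ i) ∘ (Z i)) ω := hkey.2
        _ = ∏ i ∈ T g, ∫ ω, Y i ω ^ (m g i) :=
            Finset.prod_coe_sort (T g) (fun i => ∫ ω, Y i ω ^ (m g i))
  -- integrability of the big power
  have hexp_fun : (fun ω => (∑ i, Y i ω) ^ p)
      = fun ω => ∑ g : Fin p → Fin k, ∏ j, Y (g j) ω := by
    funext ω; exact hexp ω
  have hbigint : Integrable (fun ω => (∑ i, Y i ω) ^ p) ℙ := by
    rw [hexp_fun]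
    exact integrable_finset_sum _ (fun g _ => (hfact g).1)
  have hval_eq : ∫ ω, (∑ i, Y i ω) ^ p = ∑ g : Fin p → Fin k, ∫ ω, ∏ j, Y (g j) ω := by
    calc ∫ ω, (∑ i, Y i ω) ^ p = ∫ ω, ∑ g : Fin p → Fin k, ∏ j, Y (g j) ω :=
          integral_congr_ae (Filter.Eventually.of_forall hexp)
      _ = ∑ g : Fin p → Fin k, ∫ ω, ∏ j, Y (g j) ω :=
          integral_finset_sum _ (fun g _ => (hfact g).1)
  set V : Finset (Fin p → Fin k) :=
    Finset.univ.filter (fun g => ∀ i ∈ T g, 2 ≤ m g i) with hVdef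
  have hterm : ∀ g : Fin p → Fin k, ∫ ω, ∏ j, Y (g j) ω ≤
      (if (∀ i ∈ T g, 2 ≤ m g i) then D^p * ∏ i ∈ T g, μ' i else 0) := by
    intro g
    rw [(hfact g).2]
    by_cases hg : ∀ i ∈ T g, 2 ≤ m g i
    · rw [if_pos hg]
      have habs : |∏ i ∈ T g, ∫ ω, Y i ω ^ (m g i)| ≤ D^p * ∏ i ∈ T g, μ' i := by
        rw [Finset.abs_prod]
        calc ∏ i ∈ T g, |∫ ω, Y i ω ^ (m g i)| ≤ ∏ i ∈ T g, (D * μ' i) :=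
              Finset.prod_le_prod (fun i _ => abs_nonneg _)
                (fun i hi => hYbdd i (m g i) (hm1 g i hi) (hmp g i))
          _ = D^(T g).card * ∏ i ∈ T g, μ' i := by
              rw [Finset.prod_mul_distrib, Finset.prod_const]
          _ ≤ D^p * ∏ i ∈ T g, μ' i := by
              apply mul_le_mul_of_nonneg_right (pow_le_pow_right₀ hD1 (hTcard g))
              exact Finset.prod_nonneg fun i _ => hμnn i
      exact le_trans (le_abs_self _) habs
    · rw [if_neg hg]
      push_neg at hg
      obtain ⟨i, hiT, hi2⟩ := hg
      have hge1 := hm1 g i hiT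
      have hmi : m g i = 1 := by omega
      have hzero : ∫ ω, Y i ω ^ (m g i) = 0 := by
        rw [hmi]
        simpa using hY0 i
      rw [Finset.prod_eq_zero hiT hzero]
  have hsum1 : ∑ g : Fin p → Fin k, ∫ ω, ∏ j, Y (g j) ω
      ≤ D^p * ∑ g ∈ V, ∏ i ∈ T g, μ' i := by
    calc ∑ g : Fin p → Fin k, ∫ ω, ∏ j, Y (g j) ω
        ≤ ∑ g : Fin p → Fin k, (if (∀ i ∈ T g, 2 ≤ m g i) then D^p * ∏ i ∈ T g, μ' i else 0) :=
          Finset.sum_le_sum (fun g _ => hterm g)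
      _ = ∑ g ∈ V, D^p * ∏ i ∈ T g, μ' i := (Finset.sum_filter _ _).symm
      _ = D^p * ∑ g ∈ V, ∏ i ∈ T g, μ' i := by rw [Finset.mul_sum]
  have hcardV : ∀ g ∈ V, (T g).card ≤ h := by
    intro g hg
    rw [hVdef, Finset.mem_filter] at hg
    have hsumfib : ∑ i ∈ T g, m g i = p := by
      have := Finset.card_eq_sum_card_fiberwise
        (f := g) (s := (Finset.univ : Finset (Fin p))) (t := T g)
        (fun j _ => Finset.mem_image_of_mem g (Finset.mem_univ j))
      rw [Finset.card_univ] at this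
      simpa using this.symm
    have h2 : (T g).card • 2 ≤ ∑ i ∈ T g, m g i :=
      Finset.card_nsmul_le_sum (T g) (m g) 2 hg.2
    rw [smul_eq_mul, hsumfib] at h2
    omega
  set U : Finset (Finset (Fin k)) :=
    (Finset.univ : Finset (Fin k)).powerset.filter (fun t => t.card ≤ h) with hUdef
  have hmapsU : ∀ g ∈ V, T g ∈ U := by
    intro g hg
    rw [hUdef, Finset.mem_filter, Finset.mem_powerset]
    exact ⟨Finset.subset_univ _, hcardV g hg⟩
  have hsum2 : ∑ g ∈ V, ∏ i ∈ T g, μ' i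
      = ∑ t ∈ U, ∑ g ∈ V.filter (fun g => T g = t), ∏ i ∈ T g, μ' i :=
    (Finset.sum_fiberwise_of_maps_to hmapsU _).symm
  have hinner : ∀ t ∈ U, ∑ g ∈ V.filter (fun g => T g = t), ∏ i ∈ T g, μ' i
      ≤ (h:ℝ)^p * ∏ i ∈ t, μ' i := by
    intro t ht
    have hft : ∀ g ∈ V.filter (fun g => T g = t), ∏ i ∈ T g, μ' i = ∏ i ∈ t, μ' i := by
      intro g hg
      rw [Finset.mem_filter] at hg
      rw [hg.2]
    rw [Finset.sum_congr rfl hft, Finset.sum_const, nsmul_eq_mul]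
    have hsub : V.filter (fun g => T g = t) ⊆ Fintype.piFinset (fun _ : Fin p => t) := by
      intro g hg
      rw [Finset.mem_filter] at hg
      rw [Fintype.mem_piFinset]
      intro j
      rw [← hg.2]
      exact Finset.mem_image_of_mem g (Finset.mem_univ j)
    have hcard : (V.filter (fun g => T g = t)).card ≤ t.card ^ p := by
      calc (V.filter (fun g => T g = t)).card
          ≤ (Fintype.piFinset (fun _ : Fin p => t)).card := Finset.card_le_card hsub
        _ = t.card ^ p := Fintype.card_piFinset_const t p
    have htcard : t.card ≤ h := by
      rw [hUdef, Finset.mem_filter] at ht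
      exact ht.2
    apply mul_le_mul_of_nonneg_right ?_ (Finset.prod_nonneg fun i _ => hμnn i)
    calc ((V.filter (fun g => T g = t)).card : ℝ) ≤ ((t.card ^ p : ℕ) : ℝ) :=
          Nat.cast_le.2 hcard
      _ ≤ (h:ℝ)^p := by
          push_cast
          exact pow_le_pow_left₀ (by positivity) (Nat.cast_le.2 htcard) p
  have hsum3 : ∑ t ∈ U, ∏ i ∈ t, μ' i ≤ ((h:ℝ)+1) * S^h := by
    have hmaps2 : ∀ t ∈ U, t.card ∈ Finset.range (h+1) := by
      intro t ht
      rw [hUdef, Finset.mem_filter] at ht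
      exact Finset.mem_range.2 (Nat.lt_succ_of_le ht.2)
    rw [← Finset.sum_fiberwise_of_maps_to hmaps2 (fun t => ∏ i ∈ t, μ' i)]
    calc ∑ m' ∈ Finset.range (h+1), ∑ t ∈ U.filter (fun t => t.card = m'), ∏ i ∈ t, μ' i
        ≤ ∑ m' ∈ Finset.range (h+1), S^h := by
          apply Finset.sum_le_sum
          intro m' hm'
          have hsubP : U.filter (fun t => t.card = m')
              ⊆ Finset.powersetCard m' (Finset.univ : Finset (Fin k)) := by
            intro t ht
            rw [Finset.mem_filter] at ht
            exact Finset.mem_powersetCard.2 ⟨Finset.subset_univ _, ht.2⟩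
          calc ∑ t ∈ U.filter (fun t => t.card = m'), ∏ i ∈ t, μ' i
              ≤ ∑ t ∈ Finset.powersetCard m' (Finset.univ : Finset (Fin k)), ∏ i ∈ t, μ' i :=
                Finset.sum_le_sum_of_subset_of_nonneg hsubP
                  (fun t _ _ => Finset.prod_nonneg fun i _ => hμnn i)
            _ ≤ S^m' := sum_powersetCard_prod_le μ' hμnn m'
            _ ≤ S^h := pow_le_pow_right₀ hS (Nat.lt_succ_iff.1 (Finset.mem_range.1 hm'))
      _ = ((h:ℝ)+1) * S^h := by
          rw [Finset.sum_const, Finset.card_range, nsmul_eq_mul]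
          push_cast
          ring
  have hSnn : (0:ℝ) ≤ S := le_trans zero_le_one hS
  have hfinal : ∫ ω, (∑ i, Y i ω) ^ p ≤ D^p * (h:ℝ)^p * ((h:ℝ)+1) * S^h := by
    calc ∫ ω, (∑ i, Y i ω) ^ p = ∑ g : Fin p → Fin k, ∫ ω, ∏ j, Y (g j) ω := hval_eq
      _ ≤ D^p * ∑ g ∈ V, ∏ i ∈ T g, μ' i := hsum1
      _ = D^p * ∑ t ∈ U, ∑ g ∈ V.filter (fun g => T g = t), ∏ i ∈ T g, μ' i := by rw [hsum2]
      _ ≤ D^p * ∑ t ∈ U, (h:ℝ)^p * ∏ i ∈ t, μ' i := by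
          apply mul_le_mul_of_nonneg_left (Finset.sum_le_sum hinner) (by positivity)
      _ = D^p * ((h:ℝ)^p * ∑ t ∈ U, ∏ i ∈ t, μ' i) := by rw [← Finset.mul_sum]
      _ ≤ D^p * ((h:ℝ)^p * (((h:ℝ)+1) * S^h)) := by
          apply mul_le_mul_of_nonneg_left ?_ (by positivity)
          exact mul_le_mul_of_nonneg_left hsum3 (by positivity)
      _ = D^p * (h:ℝ)^p * ((h:ℝ)+1) * S^h := by ring
  exact ⟨hbigint, hfinal⟩

end AuxiliaryLemmas

/-- Concentration for sums of `p`-wise independent non-negative variables with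
exponential tails `P(Z_i > λ) ≤ μ_i e^{-λ}`: for `λ > K`,
`P(Σ Z_i > λ Σ μ_i) ≤ λ^{-p} (C̃_p / Σ μ_i)^{p/2}`. -/

theorem pwise_subexp_concentration :
    ∃ K : ℝ, 0 < K ∧
      ∀ p : ℕ, Even p → 2 ≤ p →
        ∃ Ctp : ℝ, 0 < Ctp ∧
          ∀ (Ω : Type) (_ : MeasureSpace Ω) (_ : IsProbabilityMeasure (ℙ : Measure Ω))
            (k : ℕ) (Z : Fin k → Ω → ℝ) (μ' : Fin k → ℝ),
            (∀ i, Measurable (Z i)) →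
            (∀ i ω, 0 ≤ Z i ω) →
            PWiseIndep p Z →
            (∀ i, ∀ l : ℝ, 0 ≤ l →
              (ℙ {ω | l < Z i ω}).toReal ≤ μ' i * Real.exp (-l)) →
            1 ≤ ∑ i, μ' i →
            ∀ lam : ℝ, K < lam →
              ℙ {ω | lam * ∑ i, μ' i < ∑ i, Z i ω} ≤
                ENNReal.ofReal (lam ^ (-(p : ℝ)) * (Ctp / ∑ i, μ' i) ^ ((p : ℝ) / 2)) := by
  refine ⟨2, two_pos, ?_⟩
  intro p hEven hp
  obtain ⟨h, hph⟩ : ∃ h, p = 2 * h := by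
    obtain ⟨r, hr⟩ := hEven
    exact ⟨r, by omega⟩
  have hh1 : 1 ≤ h := by omega
  set D : ℝ := (2:ℝ)^p * ((Nat.factorial p : ℝ) + (2*(p:ℝ))^p) with hD
  have hD1 : (1:ℝ) ≤ D := by
    rw [hD]
    have h1 : (1:ℝ) ≤ (2:ℝ)^p := one_le_pow₀ one_le_two
    have h2 : (1:ℝ) ≤ (Nat.factorial p : ℝ) + (2*(p:ℝ))^p := by
      have h3 : (1:ℝ) ≤ (Nat.factorial p : ℝ) := by
        exact_mod_cast Nat.one_le_iff_ne_zero.2 (Nat.factorial_ne_zero p)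
      have h4 : (0:ℝ) ≤ (2*(p:ℝ))^p := by positivity
      linarith
    calc (1:ℝ) = 1 * 1 := by ring
      _ ≤ _ := mul_le_mul h1 h2 one_pos.le (by positivity)
  set Cp : ℝ := D^p * (h:ℝ)^p * ((h:ℝ)+1) with hCp
  have hCp1 : (1:ℝ) ≤ Cp := by
    rw [hCp]
    have h1 : (1:ℝ) ≤ D^p := one_le_pow₀ hD1
    have h2 : (1:ℝ) ≤ (h:ℝ)^p := one_le_pow₀ (by exact_mod_cast hh1)
    have h3 : (1:ℝ) ≤ (h:ℝ)+1 := by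
      have : (0:ℝ) ≤ (h:ℝ) := by positivity
      linarith
    calc (1:ℝ) = 1 * 1 * 1 := by ring
      _ ≤ D^p * (h:ℝ)^p * ((h:ℝ)+1) := by
          apply mul_le_mul (mul_le_mul h1 h2 one_pos.le (by linarith)) h3 one_pos.le
          positivity
  refine ⟨4 * Cp, by linarith, ?_⟩
  intro Ω _ _ k Z μ' hmeas hnn hindep htail hS lam hlam
  set S : ℝ := ∑ i, μ' i with hSdef
  have hSpos : (0:ℝ) < S := lt_of_lt_of_le one_pos hS
  have hlam2 : (2:ℝ) < lam := hlam
  have hlam0 : (0:ℝ) < lam := by linarith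
  set c : Fin k → ℝ := fun i => ∫ ω', Z i ω' with hcdef
  set Y : Fin k → Ω → ℝ := fun i ω => Z i ω - c i with hYdef
  have hcle : ∀ i, c i ≤ μ' i :=
    fun i => (tail_integrable (Z i) (μ' i) (hmeas i) (hnn i) (htail i)).2
  have hsumc : ∑ i, c i ≤ S := Finset.sum_le_sum (fun i _ => hcle i)
  obtain ⟨hInt, hMom⟩ := moment_bound p h hp hph k Z μ' hmeas hnn hindep htail hS
  have hMom' : ∫ ω, (∑ i, Y i ω) ^ p ≤ Cp * S ^ h := by
    calc ∫ ω, (∑ i, Y i ω) ^ p ≤ D^p * (h:ℝ)^p * ((h:ℝ)+1) * S^h := hMom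
      _ = Cp * S^h := by rw [hCp]
  have hInt' : Integrable (fun ω => (∑ i, Y i ω) ^ p) ℙ := hInt
  set t : ℝ := ((lam/2) * S)^p with htdef
  have ht0 : 0 < t := by
    rw [htdef]
    positivity
  have hsubset : {ω | lam * S < ∑ i, Z i ω} ⊆ {ω | t ≤ (∑ i, Y i ω)^p} := by
    intro ω hω
    have hω' : lam * S < ∑ i, Z i ω := hω
    have hYsum : ∑ i, Y i ω = (∑ i, Z i ω) - ∑ i, c i := by
      rw [hYdef]
      simp only
      rw [Finset.sum_sub_distrib]
    have hge : (lam/2) * S ≤ ∑ i, Y i ω := by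
      rw [hYsum]
      have : (lam - 1) * S ≤ (∑ i, Z i ω) - ∑ i, c i := by
        have h1 : lam * S - S < (∑ i, Z i ω) - ∑ i, c i := by linarith
        linarith [hsumc]
      calc (lam/2) * S ≤ (lam - 1) * S := by nlinarith
        _ ≤ _ := this
    show t ≤ (∑ i, Y i ω)^p
    rw [htdef]
    exact pow_le_pow_left₀ (by positivity) hge p
  have hmarkov := mul_meas_ge_le_integral_of_nonneg
    (Filter.Eventually.of_forall (fun ω => hEven.pow_nonneg (∑ i, Y i ω)))
    hInt' t
  have hPB : (ℙ {ω | t ≤ (∑ i, Y i ω)^p}).toReal ≤ Cp * S^h / t := by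
    rw [le_div_iff₀ ht0]
    calc (ℙ {ω | t ≤ (∑ i, Y i ω)^p}).toReal * t
        = t * (ℙ {ω | t ≤ (∑ i, Y i ω)^p}).toReal := mul_comm _ _
      _ ≤ ∫ ω, (∑ i, Y i ω)^p := hmarkov
      _ ≤ Cp * S^h := hMom'
  have hPA : (ℙ {ω | lam * S < ∑ i, Z i ω}).toReal ≤ Cp * S^h / t := by
    refine le_trans ?_ hPB
    apply ENNReal.toReal_mono (measure_ne_top _ _)
    exact measure_mono hsubset
  -- arithmetic
  have hSh0 : (0:ℝ) < S^h := by positivity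
  have harith : Cp * S^h / t = (2^p * Cp) / (lam^p * S^h) := by
    rw [htdef, mul_pow, div_pow, show p = h + h by omega, pow_add]
    have hl0 : lam ^ (h+h) ≠ 0 := by positivity
    have h20 : (2:ℝ) ^ (h+h) ≠ 0 := by positivity
    field_simp
    ring
  have hkey2 : (2:ℝ)^p * Cp ≤ (4 * Cp)^h := by
    have h4 : (4:ℝ)^h = 2^p := by
      rw [show ((4:ℝ)) = 2^2 by norm_num, ← pow_mul, ← hph]
    rw [mul_pow, h4]
    apply mul_le_mul_of_nonneg_left ?_ (by positivity)
    calc Cp = Cp^1 := (pow_one Cp).symm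
      _ ≤ Cp^h := pow_le_pow_right₀ hCp1 hh1
  have hRHS : lam ^ (-(p : ℝ)) * (4 * Cp / S) ^ ((p : ℝ) / 2)
      = (4*Cp)^h / (lam^p * S^h) := by
    have h1 : lam ^ (-(p : ℝ)) = (lam ^ p)⁻¹ := by
      rw [Real.rpow_neg hlam0.le, Real.rpow_natCast]
    have h2 : ((p:ℝ)/2) = ((h:ℕ) : ℝ) := by
      rw [hph]
      push_cast
      ring
    rw [h1, h2, Real.rpow_natCast, div_pow]
    field_simp
  have hfinal : Cp * S^h / t ≤ lam ^ (-(p : ℝ)) * (4 * Cp / S) ^ ((p : ℝ) / 2) := by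
    rw [harith, hRHS]
    gcongr
  calc ℙ {ω | lam * S < ∑ i, Z i ω}
      = ENNReal.ofReal ((ℙ {ω | lam * S < ∑ i, Z i ω}).toReal) :=
        (ENNReal.ofReal_toReal (measure_ne_top _ _)).symm
    _ ≤ ENNReal.ofReal (lam ^ (-(p : ℝ)) * (4 * Cp / S) ^ ((p : ℝ) / 2)) :=
        ENNReal.ofReal_le_ofReal (le_trans hPA hfinal)
end

section
/- Let S ⊆ [n] be a nonempty finite set and let h : [n] → [n] be drawn from a pairwise independent hash family with each h(s) uniform on [n] (n a power of 2). Define Ŷ = max_{s ∈ S} lsb(h(s)) - log₂|S|, where lsb(x) is the index of the least significant set bit of x (so P(lsb(h(s)) ≥ k) = 2^{-k}). Then there is a universal constant C such that for all λ ≥ 0: P(Ŷ > λ) ≤ C·2^{-λ} and P(Ŷ < -λ) ≤ C·2^{-λ}. -/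
open MeasureTheory ProbabilityTheory Real
open scoped ProbabilityTheory

def lsb (m x : ℕ) : ℕ := if x = 0 then m else padicValNat 2 x

lemma lsb_le {m x : ℕ} (hx : x < 2 ^ m) : lsb m x ≤ m := by
  unfold lsb
  split
  · exact le_refl m
  · rename_i h
    have hd : 2 ^ padicValNat 2 x ∣ x := pow_padicValNat_dvd
    have h1 : 2 ^ padicValNat 2 x ≤ x := Nat.le_of_dvd (Nat.pos_of_ne_zero h) hd
    have : 2 ^ padicValNat 2 x < 2 ^ m := lt_of_le_of_lt h1 hx
    exact le_of_lt ((Nat.pow_lt_pow_iff_right (by norm_num)).mp this)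

lemma lsb_ge_iff {m k : ℕ} (hk : k ≤ m) (x : ℕ) : k ≤ lsb m x ↔ 2 ^ k ∣ x := by
  haveI : Fact (Nat.Prime 2) := ⟨Nat.prime_two⟩
  unfold lsb
  split
  · rename_i h
    simp [h, hk]
  · rename_i h
    rw [padicValNat_dvd_iff_le h]

lemma count_lsb (m k : ℕ) (hk : k ≤ m) :
    ((Finset.univ : Finset (Fin (2 ^ m))).filter (fun x => k ≤ lsb m x.val)).card
      = 2 ^ (m - k) := by
  have hpow : 2 ^ (m - k) * 2 ^ k = 2 ^ m := by
    rw [← pow_add, Nat.sub_add_cancel hk]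
  have hkpos : 0 < 2 ^ k := Nat.pow_pos (by norm_num)
  rw [← Fintype.card_fin (2 ^ (m - k)), ← Finset.card_univ]
  apply Finset.card_bij' (fun x _ => (⟨x.val / 2 ^ k, by
        have := x.isLt
        exact Nat.div_lt_of_lt_mul (by rw [mul_comm, hpow]; exact x.isLt)⟩ : Fin (2 ^ (m - k))))
    (fun b _ => (⟨b.val * 2 ^ k, by
        calc b.val * 2 ^ k < 2 ^ (m - k) * 2 ^ k := by
              exact (Nat.mul_lt_mul_right hkpos).mpr b.isLt
          _ = 2 ^ m := hpow⟩ : Fin (2 ^ m)))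
  case hi => intro a ha; exact Finset.mem_univ _
  case hj =>
    intro b hb
    simp only [Finset.mem_filter, Finset.mem_univ, true_and]
    rw [lsb_ge_iff hk]
    exact Dvd.intro _ (mul_comm _ _)
  case left_inv =>
    intro a ha
    simp only [Finset.mem_filter, Finset.mem_univ, true_and] at ha
    rw [lsb_ge_iff hk] at ha
    apply Fin.ext
    simp [Nat.div_mul_cancel ha]
  case right_inv =>
    intro b hb
    apply Fin.ext
    simp [Nat.mul_div_cancel _ hkpos]

section Prob

variable {Ω : Type} [MeasureSpace Ω] {m : ℕ} {H : Fin (2 ^ m) → Ω → Fin (2 ^ m)}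

lemma meas_single (hmeas : ∀ s, Measurable (H s)) (s : Fin (2 ^ m)) (k : ℕ) :
    MeasurableSet {ω | k ≤ lsb m (H s ω).val} := by
  have : {ω | k ≤ lsb m (H s ω).val} = (H s) ⁻¹' {x | k ≤ lsb m x.val} := rfl
  rw [this]
  exact (hmeas s) (.of_discrete)

lemma two_pow_inv_arith {m k : ℕ} (hk : k ≤ m) :
    (2 : ENNReal) ^ (m - k) * ((2 : ENNReal) ^ m)⁻¹ = ((2 : ENNReal) ^ k)⁻¹ := by
  rw [show (2 : ENNReal) ^ m = 2 ^ (m - k) * 2 ^ k from by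
      rw [← pow_add, Nat.sub_add_cancel hk],
    ENNReal.mul_inv (Or.inl (by simp)) (Or.inl (by simp)), ← mul_assoc,
    ENNReal.mul_inv_cancel (by simp) (by simp), one_mul]

lemma prob_single (hmeas : ∀ s, Measurable (H s))
    (h1 : ∀ s x, ℙ {ω | H s ω = x} = ((2 ^ m : ENNReal))⁻¹)
    {k : ℕ} (hk : k ≤ m) (s : Fin (2 ^ m)) :
    ℙ {ω | k ≤ lsb m (H s ω).val} = ((2 : ENNReal) ^ k)⁻¹ := by
  classical
  set T := (Finset.univ : Finset (Fin (2 ^ m))).filter (fun x => k ≤ lsb m x.val) with hT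
  have hset : {ω | k ≤ lsb m (H s ω).val} = ⋃ x ∈ T, {ω | H s ω = x} := by
    ext ω
    simp [hT]
  rw [hset, measure_biUnion_finset]
  · rw [Finset.sum_congr rfl (fun x _ => h1 s x), Finset.sum_const, count_lsb m k hk,
      nsmul_eq_mul]
    push_cast
    exact two_pow_inv_arith hk
  · intro x _ y _ hxy
    simp only [Function.onFun, Set.disjoint_left]
    intro ω h1' h2'
    exact hxy (h1'.symm.trans h2')
  · intro x _
    show MeasurableSet ((H s) ⁻¹' {x})
    exact (hmeas s) .of_discrete

lemma prob_single_le (hmeas : ∀ s, Measurable (H s))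
    (h1 : ∀ s x, ℙ {ω | H s ω = x} = ((2 ^ m : ENNReal))⁻¹) (k : ℕ) (s : Fin (2 ^ m)) :
    ℙ {ω | k ≤ lsb m (H s ω).val} ≤ ((2 : ENNReal) ^ k)⁻¹ := by
  rcases le_or_gt k m with hk | hk
  · exact le_of_eq (prob_single hmeas h1 hk s)
  · have : {ω | k ≤ lsb m (H s ω).val} = ∅ := by
      ext ω
      simp only [Set.mem_setOf_eq, Set.mem_empty_iff_false, iff_false, not_le]
      exact lt_of_le_of_lt (lsb_le (H s ω).isLt) hk
    rw [this]
    simp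

lemma prob_pair (hmeas : ∀ s, Measurable (H s))
    (h2 : ∀ s s', s ≠ s' → ∀ x y,
      ℙ {ω | H s ω = x ∧ H s' ω = y} = ((2 ^ m * 2 ^ m : ENNReal))⁻¹)
    {k : ℕ} (hk : k ≤ m) {s s' : Fin (2 ^ m)} (hss' : s ≠ s') :
    ℙ ({ω | k ≤ lsb m (H s ω).val} ∩ {ω | k ≤ lsb m (H s' ω).val})
      = ((2 : ENNReal) ^ k)⁻¹ * ((2 : ENNReal) ^ k)⁻¹ := by
  classical
  set T := (Finset.univ : Finset (Fin (2 ^ m))).filter (fun x => k ≤ lsb m x.val) with hT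
  have hset : {ω | k ≤ lsb m (H s ω).val} ∩ {ω | k ≤ lsb m (H s' ω).val}
      = ⋃ p ∈ T ×ˢ T, {ω | H s ω = p.1 ∧ H s' ω = p.2} := by
    ext ω
    simp [hT, Finset.mem_product]
  rw [hset, measure_biUnion_finset]
  · rw [Finset.sum_congr rfl (fun p _ => h2 s s' hss' p.1 p.2), Finset.sum_const,
      Finset.card_product, count_lsb m k hk, nsmul_eq_mul]
    push_cast
    rw [ENNReal.mul_inv (Or.inl (by simp)) (Or.inl (by simp)),
      show (2:ENNReal) ^ (m-k) * 2 ^ (m-k) * (((2:ENNReal)^m)⁻¹ * ((2:ENNReal)^m)⁻¹)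
        = ((2:ENNReal) ^ (m-k) * ((2:ENNReal)^m)⁻¹) * ((2:ENNReal) ^ (m-k) * ((2:ENNReal)^m)⁻¹)
        from by ring,
      two_pow_inv_arith hk]
  · intro p _ q _ hpq
    simp only [Function.onFun, Set.disjoint_left]
    intro ω h1' h2'
    exact hpq (Prod.ext (h1'.1.symm.trans h2'.1) (h1'.2.symm.trans h2'.2))
  · intro p _
    have : {ω | H s ω = p.1 ∧ H s' ω = p.2}
        = (H s) ⁻¹' {p.1} ∩ (H s') ⁻¹' {p.2} := rfl
    rw [this]
    exact ((hmeas s) (.of_discrete)).inter ((hmeas s') (.of_discrete))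

lemma upper_core (hmeas : ∀ s, Measurable (H s))
    (h1 : ∀ s x, ℙ {ω | H s ω = x} = ((2 ^ m : ENNReal))⁻¹)
    (S : Finset (Fin (2 ^ m))) (k : ℕ) :
    ℙ {ω | ∃ s ∈ S, k ≤ lsb m (H s ω).val}
      ≤ (S.card : ENNReal) * ((2 : ENNReal) ^ k)⁻¹ := by
  have hset : {ω | ∃ s ∈ S, k ≤ lsb m (H s ω).val}
      = ⋃ s ∈ S, {ω | k ≤ lsb m (H s ω).val} := by
    ext ω; simp
  rw [hset]
  refine le_trans (measure_biUnion_finset_le S _) ?_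
  calc ∑ s ∈ S, ℙ {ω | k ≤ lsb m (H s ω).val}
      ≤ ∑ _s ∈ S, ((2 : ENNReal) ^ k)⁻¹ :=
        Finset.sum_le_sum (fun s _ => prob_single_le hmeas h1 k s)
    _ = (S.card : ENNReal) * ((2 : ENNReal) ^ k)⁻¹ := by
        rw [Finset.sum_const, nsmul_eq_mul]

lemma lower_core [IsProbabilityMeasure (ℙ : Measure Ω)]
    (hmeas : ∀ s, Measurable (H s))
    (h1 : ∀ s x, ℙ {ω | H s ω = x} = ((2 ^ m : ENNReal))⁻¹)
    (h2 : ∀ s s', s ≠ s' → ∀ x y,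
      ℙ {ω | H s ω = x ∧ H s' ω = y} = ((2 ^ m * 2 ^ m : ENNReal))⁻¹)
    (S : Finset (Fin (2 ^ m))) (hS : S.Nonempty) {k : ℕ} (hk : k ≤ m) :
    ℙ {ω | ∀ s ∈ S, lsb m (H s ω).val < k}
      ≤ (2 : ENNReal) ^ k * (S.card : ENNReal)⁻¹ := by
  classical
  set p : ENNReal := ((2 : ENNReal) ^ k)⁻¹ with hp
  set n : ℕ := S.card with hn
  have hp_ne_top : p ≠ ⊤ := by simp [hp]
  have hp_ne_zero : p ≠ 0 := by simp [hp]
  set A : Fin (2 ^ m) → Set Ω := fun s => {ω | k ≤ lsb m (H s ω).val} with hA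
  have hAmeas : ∀ s, MeasurableSet (A s) := fun s => meas_single hmeas s k
  have hAprob : ∀ s, ℙ (A s) = p := fun s => prob_single hmeas h1 hk s
  set f : Ω → ENNReal := fun ω => ∑ s ∈ S, (A s).indicator 1 ω with hf
  have hfmeas : Measurable f :=
    Finset.measurable_sum S (fun s _ => measurable_one.indicator (hAmeas s))
  -- first moment
  have hμ1 : ∫⁻ ω, f ω = (n : ENNReal) * p := by
    rw [hf]
    rw [lintegral_finset_sum S (fun s _ => measurable_one.indicator (hAmeas s))]
    rw [Finset.sum_congr rfl (fun s _ => by rw [lintegral_indicator_one (hAmeas s), hAprob s])]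
    rw [Finset.sum_const, nsmul_eq_mul]
  -- second moment
  have hμ2 : ∫⁻ ω, f ω * f ω = ∑ s ∈ S, ∑ s' ∈ S, ℙ (A s ∩ A s') := by
    have hpt : ∀ ω, f ω * f ω = ∑ s ∈ S, ∑ s' ∈ S, (A s ∩ A s').indicator 1 ω := by
      intro ω
      rw [hf]
      rw [Finset.sum_mul_sum]
      exact Finset.sum_congr rfl (fun s _ => Finset.sum_congr rfl (fun s' _ => by
        rw [Set.inter_indicator_one, Pi.mul_apply]))
    simp_rw [hpt]
    rw [lintegral_finset_sum S (fun s _ => Finset.measurable_sum S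
      (fun s' _ => measurable_one.indicator ((hAmeas s).inter (hAmeas s'))))]
    refine Finset.sum_congr rfl (fun s _ => ?_)
    rw [lintegral_finset_sum S
      (fun s' _ => measurable_one.indicator ((hAmeas s).inter (hAmeas s')))]
    exact Finset.sum_congr rfl (fun s' _ => lintegral_indicator_one ((hAmeas s).inter (hAmeas s')))
  have hμ2_le : ∫⁻ ω, f ω * f ω ≤ (n : ENNReal) * p * (1 + (n : ENNReal) * p) := by
    rw [hμ2]
    have hrow : ∀ s ∈ S, ∑ s' ∈ S, ℙ (A s ∩ A s') ≤ p + (n : ENNReal) * (p * p) := by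
      intro s hs
      rw [← Finset.add_sum_erase S _ hs, Set.inter_self, hAprob s]
      refine add_le_add_right ?_ p
      calc ∑ s' ∈ S.erase s, ℙ (A s ∩ A s')
          ≤ ∑ _s' ∈ S.erase s, p * p := by
            refine Finset.sum_le_sum (fun s' hs' => ?_)
            rw [prob_pair hmeas h2 hk (Finset.ne_of_mem_erase hs').symm]
        _ ≤ ∑ _s' ∈ S, p * p :=
            Finset.sum_le_sum_of_subset (Finset.erase_subset s S)
        _ = (n : ENNReal) * (p * p) := by rw [Finset.sum_const, nsmul_eq_mul]
    calc ∑ s ∈ S, ∑ s' ∈ S, ℙ (A s ∩ A s')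
        ≤ ∑ _s ∈ S, (p + (n : ENNReal) * (p * p)) := Finset.sum_le_sum hrow
      _ = (n : ENNReal) * (p + (n : ENNReal) * (p * p)) := by
          rw [Finset.sum_const, nsmul_eq_mul]
      _ = (n : ENNReal) * p * (1 + (n : ENNReal) * p) := by ring
  -- Cauchy-Schwarz
  set P : Set Ω := {ω | f ω ≠ 0} with hP
  have hPmeas : MeasurableSet P := by
    have : P = f ⁻¹' {0}ᶜ := by ext ω; simp [hP]
    rw [this]
    exact hfmeas (measurableSet_singleton 0).compl
  have hCS : (∫⁻ ω, f ω) * (∫⁻ ω, f ω) ≤ (∫⁻ ω, f ω * f ω) * ℙ P := by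
    set g : Ω → ENNReal := P.indicator 1 with hg
    have hgmeas : Measurable g := measurable_one.indicator hPmeas
    have hfg : ∀ ω, (f * g) ω = f ω := by
      intro ω
      by_cases h : f ω = 0
      · simp [hg, h]
      · have : ω ∈ P := h
        simp [hg, Set.indicator_of_mem this]
    have hconj : Real.HolderConjugate 2 2 := Real.HolderConjugate.two_two
    have key := ENNReal.lintegral_mul_le_Lp_mul_Lq (ℙ : Measure Ω) hconj
      hfmeas.aemeasurable hgmeas.aemeasurable
    rw [lintegral_congr hfg] at key
    have hf2 : ∫⁻ ω, f ω ^ (2 : ℝ) = ∫⁻ ω, f ω * f ω := by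
      refine lintegral_congr (fun ω => ?_)
      rw [show (2 : ℝ) = ((2 : ℕ) : ℝ) by norm_num, ENNReal.rpow_natCast, sq]
    have hg2 : ∫⁻ ω, g ω ^ (2 : ℝ) = ℙ P := by
      rw [← lintegral_indicator_one hPmeas]
      refine lintegral_congr (fun ω => ?_)
      by_cases h : ω ∈ P
      · simp [hg, Set.indicator_of_mem h]
      · simp [hg, Set.indicator_of_notMem h, ENNReal.zero_rpow_of_pos two_pos]
    rw [hf2, hg2] at key
    calc (∫⁻ ω, f ω) * (∫⁻ ω, f ω)
        ≤ ((∫⁻ ω, f ω * f ω) ^ (1/2 : ℝ) * ℙ P ^ (1/2 : ℝ))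
          * ((∫⁻ ω, f ω * f ω) ^ (1/2 : ℝ) * ℙ P ^ (1/2 : ℝ)) := mul_le_mul' key key
      _ = ((∫⁻ ω, f ω * f ω) ^ (1/2 : ℝ) * (∫⁻ ω, f ω * f ω) ^ (1/2 : ℝ))
          * (ℙ P ^ (1/2 : ℝ) * ℙ P ^ (1/2 : ℝ)) := by ring
      _ = (∫⁻ ω, f ω * f ω) * ℙ P := by
          rw [← ENNReal.rpow_add_of_nonneg _ _ (by norm_num) (by norm_num),
            ← ENNReal.rpow_add_of_nonneg _ _ (by norm_num) (by norm_num)]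
          norm_num
  -- put together: a ≤ (1+a) * ℙ P where a = n p
  set a : ENNReal := (n : ENNReal) * p with ha
  have hn1 : 1 ≤ n := hS.card_pos
  have ha_ne_zero : a ≠ 0 := by
    simp [ha, hp]
    omega
  have ha_ne_top : a ≠ ⊤ := by
    rw [ha]
    exact ENNReal.mul_ne_top (ENNReal.natCast_ne_top n) hp_ne_top
  have hstep : a ≤ (1 + a) * ℙ P := by
    have h1' : a * a ≤ a * ((1 + a) * ℙ P) := by
      calc a * a = (∫⁻ ω, f ω) * (∫⁻ ω, f ω) := by rw [hμ1]
        _ ≤ (∫⁻ ω, f ω * f ω) * ℙ P := hCS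
        _ ≤ (a * (1 + a)) * ℙ P := by
            exact mul_le_mul_left (by rw [ha]; exact hμ2_le) _
        _ = a * ((1 + a) * ℙ P) := by ring
    exact (ENNReal.mul_le_mul_iff_right ha_ne_zero ha_ne_top).mp h1'
  -- conclude
  have hPc : {ω | ∀ s ∈ S, lsb m (H s ω).val < k} = Pᶜ := by
    ext ω
    simp only [hP, Set.mem_compl_iff, Set.mem_setOf_eq, not_not, hf]
    rw [Finset.sum_eq_zero_iff]
    constructor
    · intro h s hs
      rw [Set.indicator_apply_eq_zero]
      intro hmem
      exact absurd hmem (by simp [hA, not_le.mpr (h s hs)])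
    · intro h s hs
      have := h s hs
      rw [Set.indicator_apply_eq_zero] at this
      by_contra hcon
      push_neg at hcon
      exact one_ne_zero (this (by simpa [hA] using hcon))
  rw [hPc, prob_compl_eq_one_sub hPmeas]
  have htarget : (1 : ENNReal) - ℙ P ≤ a⁻¹ := by
    rw [tsub_le_iff_right]
    have h1a_ne_zero : (1 : ENNReal) + a ≠ 0 := by simp
    have h1a_ne_top : (1 : ENNReal) + a ≠ ⊤ := by
      simp [ha_ne_top]
    calc (1 : ENNReal) = (1 + a) * (1 + a)⁻¹ :=
          (ENNReal.mul_inv_cancel h1a_ne_zero h1a_ne_top).symm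
      _ = (1 + a)⁻¹ + a * (1 + a)⁻¹ := by ring
      _ ≤ a⁻¹ + ℙ P := by
          refine add_le_add (ENNReal.inv_le_inv.mpr le_add_self) ?_
          calc a * (1 + a)⁻¹ ≤ ((1 + a) * ℙ P) * (1 + a)⁻¹ := mul_le_mul_left hstep _
            _ = ℙ P * ((1 + a) * (1 + a)⁻¹) := by ring
            _ = ℙ P := by rw [ENNReal.mul_inv_cancel h1a_ne_zero h1a_ne_top, mul_one]
  refine le_trans htarget ?_
  rw [ha, hp, ENNReal.mul_inv (Or.inl (by simp; omega)) (Or.inl (by simp)), inv_inv]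
  rw [mul_comm]

end Prob

lemma pow_inv_ofReal (j : ℕ) :
    ((2 : ENNReal) ^ j)⁻¹ = ENNReal.ofReal (((2 : ℝ) ^ j)⁻¹) := by
  rw [ENNReal.ofReal_inv_of_pos (by positivity), ENNReal.ofReal_pow (by norm_num)]
  norm_num

lemma real_pow_rpow (j : ℕ) : ((2 : ℝ) ^ j)⁻¹ = (2 : ℝ) ^ (-(j : ℝ)) := by
  rw [← Real.rpow_natCast 2 j, ← Real.rpow_neg (by norm_num)]

/-- Tail bounds for the Flajolet–Martin estimator error
`Ŷ = max_{s ∈ S} lsb(h(s)) - log₂ |S|` with a pairwise independent hash family: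
both `P(Ŷ > λ)` and `P(Ŷ < -λ)` are at most `C 2^{-λ}`. -/
theorem fm_estimator_tails :
    ∃ C : ℝ, 0 < C ∧
      ∀ (Ω : Type) (_ : MeasureSpace Ω) (_ : IsProbabilityMeasure (ℙ : Measure Ω))
        (m : ℕ) (H : Fin (2 ^ m) → Ω → Fin (2 ^ m)),
        (∀ s, Measurable (H s)) →
        (∀ s x, ℙ {ω | H s ω = x} = ((2 ^ m : ENNReal))⁻¹) →
        (∀ s s', s ≠ s' → ∀ x y,
          ℙ {ω | H s ω = x ∧ H s' ω = y} = ((2 ^ m * 2 ^ m : ENNReal))⁻¹) →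
        ∀ S : Finset (Fin (2 ^ m)), S.Nonempty →
          ∀ Y : Ω → ℝ,
            (∀ ω, Y ω =
              ((S.sup fun s => lsb m (H s ω).val : ℕ) : ℝ) - Real.logb 2 S.card) →
            ∀ lam : ℝ, 0 ≤ lam →
              ℙ {ω | lam < Y ω} ≤ ENNReal.ofReal (C * (2 : ℝ) ^ (-lam)) ∧
              ℙ {ω | Y ω < -lam} ≤ ENNReal.ofReal (C * (2 : ℝ) ^ (-lam)) := by
  refine ⟨2, by norm_num, ?_⟩
  intro Ω _ _ m H hmeas h1 h2 S hS Y hY lam hlam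
  have hn0 : (0 : ℝ) < (S.card : ℝ) := by exact_mod_cast hS.card_pos
  have hn1 : (1 : ℝ) ≤ (S.card : ℝ) := by exact_mod_cast hS.card_pos
  have hlogb0 : 0 ≤ Real.logb 2 (S.card : ℝ) := Real.logb_nonneg one_lt_two hn1
  have hnle : (S.card : ℝ) ≤ (2 : ℝ) ^ (m : ℝ) := by
    rw [Real.rpow_natCast]
    exact_mod_cast le_trans (Finset.card_le_univ S) (le_of_eq (by simp))
  have hlogm : Real.logb 2 (S.card : ℝ) ≤ (m : ℝ) :=
    (Real.logb_le_iff_le_rpow one_lt_two hn0).mpr hnle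
  constructor
  · -- upper tail
    set k' : ℕ := ⌊Real.logb 2 (S.card : ℝ) + lam⌋₊ + 1 with hk'
    have hck' : Real.logb 2 (S.card : ℝ) + lam < (k' : ℝ) := by
      rw [hk']
      push_cast
      exact Nat.lt_floor_add_one _
    have hincl : {ω | lam < Y ω} ⊆ {ω | ∃ s ∈ S, k' ≤ lsb m (H s ω).val} := by
      intro ω hω
      simp only [Set.mem_setOf_eq] at hω ⊢
      rw [hY ω] at hω
      have hx : Real.logb 2 (S.card : ℝ) + lam
          < ((S.sup fun s => lsb m (H s ω).val : ℕ) : ℝ) := by linarith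
      have hfl : ⌊Real.logb 2 (S.card : ℝ) + lam⌋₊ < (S.sup fun s => lsb m (H s ω).val) :=
        (Nat.floor_lt (by linarith)).mpr hx
      obtain ⟨s, hs, hsup⟩ := Finset.exists_mem_eq_sup S hS (fun s => lsb m (H s ω).val)
      exact ⟨s, hs, by omega⟩
    refine le_trans (measure_mono hincl) (le_trans (upper_core hmeas h1 S k') ?_)
    have hreal : (S.card : ℝ) * ((2 : ℝ) ^ k')⁻¹ ≤ 2 * (2 : ℝ) ^ (-lam) := by
      rw [real_pow_rpow]
      calc (S.card : ℝ) * (2 : ℝ) ^ (-(k' : ℝ))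
          = (2 : ℝ) ^ (Real.logb 2 (S.card : ℝ)) * (2 : ℝ) ^ (-(k' : ℝ)) := by
            rw [Real.rpow_logb (by norm_num) (by norm_num) hn0]
        _ = (2 : ℝ) ^ (Real.logb 2 (S.card : ℝ) + -(k' : ℝ)) := by
            rw [← Real.rpow_add (by norm_num)]
        _ ≤ (2 : ℝ) ^ (-lam) :=
            Real.rpow_le_rpow_of_exponent_le (by norm_num) (by linarith)
        _ ≤ 2 * (2 : ℝ) ^ (-lam) := by
            nlinarith [Real.rpow_pos_of_pos (show (0:ℝ) < 2 by norm_num) (-lam)]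
    calc (S.card : ENNReal) * ((2 : ENNReal) ^ k')⁻¹
        = ENNReal.ofReal ((S.card : ℝ) * ((2 : ℝ) ^ k')⁻¹) := by
          rw [ENNReal.ofReal_mul (by positivity), ENNReal.ofReal_natCast, ← pow_inv_ofReal]
      _ ≤ ENNReal.ofReal (2 * (2 : ℝ) ^ (-lam)) := ENNReal.ofReal_le_ofReal hreal
  · -- lower tail
    by_cases hc : Real.logb 2 (S.card : ℝ) - lam ≤ 0
    · have hempty : {ω | Y ω < -lam} = ∅ := by
        ext ω
        simp only [Set.mem_setOf_eq, Set.mem_empty_iff_false, iff_false, not_lt]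
        rw [hY ω]
        have : (0 : ℝ) ≤ ((S.sup fun s => lsb m (H s ω).val : ℕ) : ℝ) := by positivity
        linarith
      rw [hempty]
      simp
    · push_neg at hc
      set k : ℕ := ⌈Real.logb 2 (S.card : ℝ) - lam⌉₊ with hk
      have hkm : k ≤ m := Nat.ceil_le.mpr (by linarith)
      have hkc : Real.logb 2 (S.card : ℝ) - lam ≤ (k : ℝ) := Nat.le_ceil _
      have hkc2 : (k : ℝ) < Real.logb 2 (S.card : ℝ) - lam + 1 :=
        Nat.ceil_lt_add_one (le_of_lt hc)
      have hincl : {ω | Y ω < -lam} ⊆ {ω | ∀ s ∈ S, lsb m (H s ω).val < k} := by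
        intro ω hω s hs
        rw [Set.mem_setOf_eq, hY ω] at hω
        have hsup : ((S.sup fun s => lsb m (H s ω).val : ℕ) : ℝ) < (k : ℝ) := by linarith
        have hsupk : (S.sup fun s => lsb m (H s ω).val) < k := by exact_mod_cast hsup
        exact lt_of_le_of_lt (Finset.le_sup (f := fun s => lsb m (H s ω).val) hs) hsupk
      refine le_trans (measure_mono hincl)
        (le_trans (lower_core hmeas h1 h2 S hS hkm) ?_)
      have hreal : (2 : ℝ) ^ k * ((S.card : ℝ))⁻¹ ≤ 2 * (2 : ℝ) ^ (-lam) := by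
        rw [← Real.rpow_natCast 2 k]
        rw [show (S.card : ℝ) = (2 : ℝ) ^ (Real.logb 2 (S.card : ℝ)) from
          (Real.rpow_logb (by norm_num) (by norm_num) hn0).symm]
        rw [← Real.rpow_neg (by norm_num), ← Real.rpow_add (by norm_num)]
        calc (2 : ℝ) ^ ((k : ℝ) + -(Real.logb 2 (S.card : ℝ)))
            ≤ (2 : ℝ) ^ (1 + -lam) :=
              Real.rpow_le_rpow_of_exponent_le (by norm_num) (by linarith)
          _ = 2 * (2 : ℝ) ^ (-lam) := by
              rw [Real.rpow_add (by norm_num), Real.rpow_one]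
      calc (2 : ENNReal) ^ k * ((S.card : ENNReal))⁻¹
          = ENNReal.ofReal ((2 : ℝ) ^ k * ((S.card : ℝ))⁻¹) := by
            rw [ENNReal.ofReal_mul (by positivity), ENNReal.ofReal_pow (by norm_num),
              ENNReal.ofReal_inv_of_pos hn0, ENNReal.ofReal_natCast]
            norm_num
        _ ≤ ENNReal.ofReal (2 * (2 : ℝ) ^ (-lam)) := ENNReal.ofReal_le_ofReal hreal
end

section
/- Let X_1, …, X_R be [K]-valued random variables that are r-wise independent with each X_i uniform on [K], where R ≤ K/20, and let B_j = #{i : X_i = j} for j ∈ [K] and M = max_j B_j. Then for λ > 2, P(M > λ) ≤ R · exp(-c·min(λ, r)·log λ) for a universal constant c. -/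
open MeasureTheory ProbabilityTheory Real
open scoped ProbabilityTheory

/-- `X` is `r`-wise independent: any `r` of the variables are mutually independent. -/
def RWiseIndep {Ω : Type*} [MeasureSpace Ω] {R K : ℕ} (r : ℕ)
    (X : Fin R → Ω → Fin K) : Prop :=
  ∀ s : Finset (Fin R), s.card ≤ r →
    iIndepFun (fun i : s => X i) ℙ

section auxiliary

lemma RwiseAux.nat_key (R K L t : ℕ) (hK : 20 * R ≤ K) (ht1 : 1 ≤ t) :
    K * R.choose t * (20 ^ (t - 1) * (L + 1 - t) ^ t) ≤ R * (K ^ t * L.choose t) := by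
  have h1 : R.choose t * t.factorial ≤ R ^ t := by
    rw [mul_comm, ← Nat.descFactorial_eq_factorial_mul_choose]
    exact Nat.descFactorial_le_pow _ _
  have h2 : (L + 1 - t) ^ t ≤ L.choose t * t.factorial := by
    rw [mul_comm, ← Nat.descFactorial_eq_factorial_mul_choose]
    exact Nat.pow_sub_le_descFactorial _ _
  obtain ⟨u, rfl⟩ : ∃ u, t = u + 1 := ⟨t - 1, by omega⟩
  have h3 : K * (20 ^ u * R ^ (u + 1)) ≤ R * K ^ (u + 1) := by
    have hKu : 20 ^ u * R ^ u ≤ K ^ u := by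
      rw [← mul_pow]; exact Nat.pow_le_pow_left hK u
    calc K * (20 ^ u * R ^ (u + 1)) = (K * R) * (20 ^ u * R ^ u) := by ring
      _ ≤ (K * R) * K ^ u := Nat.mul_le_mul_left _ hKu
      _ = R * K ^ (u + 1) := by ring
  have key : (K * R.choose (u+1) * (20 ^ u * (L + 1 - (u+1)) ^ (u+1))) * (u+1).factorial ≤
      (R * (K ^ (u+1) * L.choose (u+1))) * (u+1).factorial := by
    calc (K * R.choose (u+1) * (20 ^ u * (L + 1 - (u+1)) ^ (u+1))) * (u+1).factorial
        = (R.choose (u+1) * (u+1).factorial) * (K * (20 ^ u * (L + 1 - (u+1)) ^ (u+1))) := by ring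
      _ ≤ R ^ (u+1) * (K * (20 ^ u * (L + 1 - (u+1)) ^ (u+1))) := Nat.mul_le_mul_right _ h1
      _ = (K * (20 ^ u * R ^ (u+1))) * (L + 1 - (u+1)) ^ (u+1) := by ring
      _ ≤ (R * K ^ (u+1)) * (L + 1 - (u+1)) ^ (u+1) := Nat.mul_le_mul_right _ h3
      _ ≤ (R * K ^ (u+1)) * (L.choose (u+1) * (u+1).factorial) := Nat.mul_le_mul_left _ h2
      _ = (R * (K ^ (u+1) * L.choose (u+1))) * (u+1).factorial := by ring
  have := Nat.le_of_mul_le_mul_right key (Nat.factorial_pos _)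
  simpa using this

lemma RwiseAux.real_key (R K L r t : ℕ) (lam : ℝ)
    (hR : 1 ≤ R) (hK : 20 * R ≤ K) (hr : 1 ≤ r) (hL : 3 ≤ L)
    (hlam2 : 2 < lam) (hlamL : lam < L)
    (htdef : t = min ((L + 1) / 2) r) :
    (K : ℝ) * (R.choose t) * ((K : ℝ)⁻¹) ^ t / (L.choose t) ≤
      (R : ℝ) * Real.exp (-(1/4) * min lam (r : ℝ) * Real.log lam) := by
  have hnat := RwiseAux.nat_key R K L t hK (by omega)
  have hKpos : 0 < K := by omega
  have ht1 : 1 ≤ t := by omega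
  have ht2L : 2 * t ≤ L + 1 := by omega
  have htL : t ≤ L := by omega
  have hlam0 : (0:ℝ) < lam := by linarith
  have hlamL' : lam < (L:ℝ) := hlamL
  have hlog : 0 < Real.log lam := Real.log_pos (by linarith)
  have hm2t : min lam (r:ℝ) ≤ 2 * t := by
    rcases le_or_gt ((L+1)/2) r with h | h
    · have h2t : (L:ℝ) ≤ 2 * t := by exact_mod_cast (show L ≤ 2 * t by omega)
      calc min lam (r:ℝ) ≤ lam := min_le_left _ _
        _ ≤ 2 * t := by linarith
    · have htr' : t = r := by omega
      subst htr'
      calc min lam (t:ℝ) ≤ t := min_le_right _ _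
        _ ≤ 2 * t := by nlinarith [Nat.cast_nonneg (α := ℝ) t]
  -- exp bound
  have hexp : ((Real.sqrt lam)⁻¹) ^ t ≤ Real.exp (-(1/4) * min lam (r:ℝ) * Real.log lam) := by
    have hsq : Real.sqrt lam = Real.exp (Real.log lam / 2) := by
      rw [← Real.log_sqrt hlam0.le, Real.exp_log (Real.sqrt_pos.2 hlam0)]
    have h1 : ((Real.sqrt lam)⁻¹) ^ t = Real.exp ((t:ℝ) * (-(Real.log lam / 2))) := by
      rw [hsq, ← Real.exp_neg, ← Real.exp_nat_mul]
    rw [h1]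
    apply Real.exp_le_exp.2
    have : (1/4) * min lam (r:ℝ) ≤ (t:ℝ)/2 := by linarith
    nlinarith [hlog]
  -- sqrt pow bound
  have hcast : ((L + 1 - t : ℕ) : ℝ) = (L:ℝ) + 1 - t := by
    push_cast [Nat.cast_sub (by omega : t ≤ L + 1)]; ring
  have hsqrtpow : Real.sqrt lam ^ t ≤ (20:ℝ) ^ (t-1) * ((L + 1 - t : ℕ) : ℝ) ^ t := by
    have hs1 : Real.sqrt lam ≤ lam := (Real.sqrt_le_left (by linarith)).2 (by nlinarith)
    have hs0 : 0 ≤ Real.sqrt lam := Real.sqrt_nonneg _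
    rcases eq_or_lt_of_le ht1 with h1 | h2
    · -- t = 1
      obtain rfl : t = 1 := h1.symm
      simp only [pow_one, Nat.add_sub_cancel, pow_zero, one_mul]
      push_cast
      linarith
    · -- t ≥ 2
      have hb : lam / 2 ≤ ((L + 1 - t : ℕ) : ℝ) := by
        rw [hcast]
        have : (2*t : ℝ) ≤ (L:ℝ) + 1 := by exact_mod_cast ht2L
        linarith
      calc Real.sqrt lam ^ t ≤ lam ^ t := pow_le_pow_left₀ hs0 hs1 t
        _ = 2 ^ t * (lam / 2) ^ t := by rw [← mul_pow]; ring_nf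
        _ ≤ 20 ^ (t-1) * (lam / 2) ^ t := by
            apply mul_le_mul_of_nonneg_right _ (by positivity)
            calc (2:ℝ) ^ t ≤ (4:ℝ) ^ (t-1) := by
                  rw [show (4:ℝ) = 2^2 by norm_num, ← pow_mul]
                  exact pow_le_pow_right₀ one_le_two (by omega)
              _ ≤ 20 ^ (t-1) := pow_le_pow_left₀ (by norm_num) (by norm_num) _
        _ ≤ 20 ^ (t-1) * ((L + 1 - t : ℕ) : ℝ) ^ t := by
            apply mul_le_mul_of_nonneg_left _ (by positivity)
            exact pow_le_pow_left₀ (by positivity) hb t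
  -- assemble
  have hCL : (0:ℝ) < (L.choose t : ℝ) := by exact_mod_cast Nat.choose_pos htL
  have hsp : (0:ℝ) < Real.sqrt lam ^ t := by positivity
  have hKr : (0:ℝ) < (K:ℝ) := by exact_mod_cast hKpos
  calc (K : ℝ) * (R.choose t) * ((K : ℝ)⁻¹) ^ t / (L.choose t)
      = ((K:ℝ) * R.choose t) / ((K:ℝ)^t * L.choose t) := by
        rw [inv_pow]; field_simp
    _ ≤ (R:ℝ) / (Real.sqrt lam ^ t) := by
        rw [div_le_div_iff₀ (by positivity) hsp]
        calc (K:ℝ) * R.choose t * Real.sqrt lam ^ t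
            ≤ (K:ℝ) * R.choose t * ((20:ℝ)^(t-1) * ((L + 1 - t : ℕ) : ℝ) ^ t) := by
              apply mul_le_mul_of_nonneg_left hsqrtpow (by positivity)
          _ ≤ (R:ℝ) * ((K:ℝ)^t * L.choose t) := by exact_mod_cast hnat
    _ = (R:ℝ) * ((Real.sqrt lam)⁻¹) ^ t := by rw [inv_pow, div_eq_mul_inv]
    _ ≤ (R:ℝ) * Real.exp (-(1/4) * min lam (r:ℝ) * Real.log lam) := by
        apply mul_le_mul_of_nonneg_left hexp (by positivity)

variable {Ω : Type} [MeasureSpace Ω] {R K r : ℕ}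
  (X : Fin R → Ω → Fin K)

lemma RwiseAux.meas_A (hmeas : ∀ i, Measurable (X i)) (S : Finset (Fin R)) (j : Fin K) :
    MeasurableSet {ω | ∀ i ∈ S, X i ω = j} := by
  have : {ω | ∀ i ∈ S, X i ω = j} = ⋂ i ∈ S, X i ⁻¹' {j} := by
    ext ω; simp [Set.mem_iInter]
  rw [this]
  exact MeasurableSet.biInter (S.countable_toSet) fun i _ => hmeas i (measurableSet_singleton j)

lemma RwiseAux.prob_A (hindep : RWiseIndep r X)
    (hunif : ∀ i x, ℙ {ω | X i ω = x} = ((K : ENNReal))⁻¹)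
    (S : Finset (Fin R)) (hS : S.card ≤ r) (j : Fin K) :
    ℙ {ω | ∀ i ∈ S, X i ω = j} = ((K : ENNReal))⁻¹ ^ S.card := by
  have h := (hindep S hS).meas_iInter (s := fun i : S => X i.val ⁻¹' {j})
    (fun i => ⟨{j}, measurableSet_singleton j, rfl⟩)
  have hset : (⋂ i : S, X i.val ⁻¹' {j}) = {ω | ∀ i ∈ S, X i ω = j} := by
    ext ω; simp [Set.mem_iInter, Subtype.forall]
  rw [hset] at h
  rw [h]
  have : ∀ i : S, ℙ (X i.val ⁻¹' {j}) = ((K : ENNReal))⁻¹ := fun i => hunif i.val j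
  simp only [this, Finset.prod_const, Finset.card_univ, Fintype.card_coe]

lemma RwiseAux.bin_bound (hmeas : ∀ i, Measurable (X i)) (hindep : RWiseIndep r X)
    (hunif : ∀ i x, ℙ {ω | X i ω = x} = ((K : ENNReal))⁻¹)
    (t L : ℕ) (htr : t ≤ r) (j : Fin K) :
    (L.choose t : ENNReal) *
      ℙ {ω | L ≤ ((Finset.univ.filter fun i : Fin R => X i ω = j).card)} ≤
      (R.choose t : ENNReal) * ((K : ENNReal))⁻¹ ^ t := by
  classical
  set F : Ω → Finset (Fin R) := fun ω => Finset.univ.filter fun i => X i ω = j with hF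
  have hFsub : ∀ (S : Finset (Fin R)) ω, S ⊆ F ω ↔ ∀ i ∈ S, X i ω = j := by
    intro S ω
    simp [hF, Finset.subset_iff]
  have hBmeas : Measurable fun ω => (F ω).card := by
    have : (fun ω => (F ω).card) = fun ω => ∑ i : Fin R, if X i ω = j then 1 else 0 := by
      funext ω; rw [hF]; rw [Finset.card_filter]
    rw [this]
    exact Finset.measurable_sum _ fun i _ =>
      Measurable.ite (hmeas i (measurableSet_singleton j)) measurable_const measurable_const
  have hEmeas : MeasurableSet {ω | L ≤ (F ω).card} :=
    hBmeas (MeasurableSpace.measurableSet_top (s := Set.Ici L))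
  -- pointwise bound
  have hpt : ∀ ω, Set.indicator {ω | L ≤ (F ω).card} (fun _ => (L.choose t : ENNReal)) ω ≤
      ∑ S ∈ Finset.powersetCard t Finset.univ,
        Set.indicator {ω' | ∀ i ∈ S, X i ω' = j} (fun _ => (1 : ENNReal)) ω := by
    intro ω
    by_cases hω : L ≤ (F ω).card
    · rw [Set.indicator_of_mem (show ω ∈ {ω | L ≤ (F ω).card} from hω)]
      calc (L.choose t : ENNReal) ≤ ((F ω).card.choose t : ENNReal) := by
            exact_mod_cast Nat.choose_le_choose t hω
        _ = ∑ S ∈ Finset.powersetCard t (F ω), (1 : ENNReal) := by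
            rw [Finset.sum_const, Finset.card_powersetCard]; simp
        _ = ∑ S ∈ Finset.powersetCard t (F ω),
              Set.indicator {ω' | ∀ i ∈ S, X i ω' = j} (fun _ => (1 : ENNReal)) ω := by
            apply Finset.sum_congr rfl
            intro S hS
            rw [Set.indicator_of_mem]
            exact (hFsub S ω).1 (Finset.mem_powersetCard.1 hS).1
        _ ≤ ∑ S ∈ Finset.powersetCard t Finset.univ,
              Set.indicator {ω' | ∀ i ∈ S, X i ω' = j} (fun _ => (1 : ENNReal)) ω := by
            apply Finset.sum_le_sum_of_subset
            exact Finset.powersetCard_mono (Finset.subset_univ _)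
    · rw [Set.indicator_of_notMem (show ω ∉ {ω | L ≤ (F ω).card} from hω)]
      exact zero_le
  calc (L.choose t : ENNReal) * ℙ {ω | L ≤ (F ω).card}
      = ∫⁻ ω, Set.indicator {ω | L ≤ (F ω).card} (fun _ => (L.choose t : ENNReal)) ω ∂ℙ := by
        rw [lintegral_indicator_const hEmeas]
    _ ≤ ∫⁻ ω, ∑ S ∈ Finset.powersetCard t Finset.univ,
          Set.indicator {ω' | ∀ i ∈ S, X i ω' = j} (fun _ => (1 : ENNReal)) ω ∂ℙ :=
        lintegral_mono hpt
    _ = ∑ S ∈ Finset.powersetCard t Finset.univ,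
          ∫⁻ ω, Set.indicator {ω' | ∀ i ∈ S, X i ω' = j} (fun _ => (1 : ENNReal)) ω ∂ℙ := by
        apply lintegral_finset_sum
        intro S _
        exact (measurable_const.indicator (RwiseAux.meas_A X hmeas S j))
    _ = ∑ S ∈ Finset.powersetCard t Finset.univ, ℙ {ω' | ∀ i ∈ S, X i ω' = j} := by
        apply Finset.sum_congr rfl
        intro S _
        rw [lintegral_indicator_const (RwiseAux.meas_A X hmeas S j), one_mul]
    _ = (R.choose t : ENNReal) * ((K : ENNReal))⁻¹ ^ t := by
        rw [Finset.sum_congr rfl (fun S hS => by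
          rw [RwiseAux.prob_A X hindep hunif S
              (le_trans (le_of_eq (Finset.mem_powersetCard.1 hS).2) htr) j,
            (Finset.mem_powersetCard.1 hS).2])]
        rw [Finset.sum_const, Finset.card_powersetCard, Finset.card_univ, Fintype.card_fin]
        simp [mul_comm]

end auxiliary

/-- Max-load bound for `r`-wise independent balls into bins: throwing `R ≤ K/20`
balls `r`-wise independently and uniformly into `K` bins, the max bin load `M`
satisfies `P(M > λ) ≤ R exp(-c min(λ,r) log λ)` for `λ > 2`. -/
theorem rwise_max_load_bound :
    ∃ c : ℝ, 0 < c ∧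
      ∀ (Ω : Type) (_ : MeasureSpace Ω) (_ : IsProbabilityMeasure (ℙ : Measure Ω))
        (R K r : ℕ) (_ : 0 < K) (_ : 20 * R ≤ K)
        (X : Fin R → Ω → Fin K),
        (∀ i, Measurable (X i)) →
        RWiseIndep r X →
        (∀ i x, ℙ {ω | X i ω = x} = ((K : ENNReal))⁻¹) →
        ∀ M : Ω → ℕ,
          (∀ ω, M ω = Finset.univ.sup fun j : Fin K =>
            (Finset.univ.filter fun i : Fin R => X i ω = j).card) →
          ∀ lam : ℝ, 2 < lam →
            ℙ {ω | lam < (M ω : ℝ)} ≤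
              ENNReal.ofReal ((R : ℝ) *
                Real.exp (-c * min lam (r : ℝ) * Real.log lam)) := by
  refine ⟨1/4, by norm_num, ?_⟩
  intro Ω _ hprob R K r hK0 hKR X hmeas hindep hunif M hM lam hlam
  classical
  have hlam0 : (0:ℝ) ≤ lam := by linarith
  by_cases hR0 : R = 0
  · subst hR0
    have hempty : {ω | lam < (M ω : ℝ)} = ∅ := by
      ext ω
      simp only [Set.mem_setOf_eq, Set.mem_empty_iff_false, iff_false, not_lt]
      have hMz : M ω = 0 := by rw [hM]; simp
      rw [hMz]
      exact_mod_cast hlam0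
    rw [hempty]
    simp
  have hR1 : 1 ≤ R := by omega
  by_cases hr0 : r = 0
  · subst hr0
    have hmin : min lam ((0:ℕ):ℝ) = 0 := by
      simp only [Nat.cast_zero]; exact min_eq_right (by linarith)
    rw [hmin, mul_zero, zero_mul, Real.exp_zero, mul_one, ENNReal.ofReal_natCast]
    exact le_trans prob_le_one (by exact_mod_cast hR1)
  have hr1 : 1 ≤ r := by omega
  set L : ℕ := ⌊lam⌋₊ + 1 with hLdef
  have hfl : 2 ≤ ⌊lam⌋₊ := Nat.le_floor (by exact_mod_cast hlam.le)
  have hL3 : 3 ≤ L := by omega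
  have hlamL : lam < (L:ℝ) := by
    have := Nat.lt_floor_add_one lam
    rw [hLdef]; push_cast; linarith
  set t : ℕ := min ((L+1)/2) r with htdef
  have htr : t ≤ r := min_le_right _ _
  have htL : t ≤ L := by omega
  have hCL0 : (L.choose t : ENNReal) ≠ 0 := by
    exact_mod_cast (Nat.choose_pos htL).ne'
  have hCLtop : (L.choose t : ENNReal) ≠ ⊤ := ENNReal.natCast_ne_top _
  -- rewrite the event
  have hev : {ω | lam < (M ω : ℝ)} = {ω | L ≤ M ω} := by
    ext ω
    simp only [Set.mem_setOf_eq]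
    rw [← Nat.floor_lt hlam0]
    omega
  rw [hev]
  have hsub : {ω | L ≤ M ω} ⊆ ⋃ j : Fin K,
      {ω | L ≤ ((Finset.univ.filter fun i : Fin R => X i ω = j).card)} := by
    intro ω hω
    simp only [Set.mem_setOf_eq] at hω
    rw [hM ω, Finset.le_sup_iff (show (⊥:ℕ) < L by rw [Nat.bot_eq_zero]; omega)] at hω
    obtain ⟨j, _, hj⟩ := hω
    exact Set.mem_iUnion.2 ⟨j, hj⟩
  have hbound := fun j => RwiseAux.bin_bound X hmeas hindep hunif t L htr j
  calc ℙ {ω | L ≤ M ω}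
      ≤ ℙ (⋃ j : Fin K,
          {ω | L ≤ ((Finset.univ.filter fun i : Fin R => X i ω = j).card)}) :=
        measure_mono hsub
    _ ≤ ∑ j : Fin K,
          ℙ {ω | L ≤ ((Finset.univ.filter fun i : Fin R => X i ω = j).card)} :=
        (measure_iUnion_le _).trans_eq (tsum_fintype _)
    _ ≤ ∑ _j : Fin K,
          ((R.choose t : ENNReal) * ((K : ENNReal))⁻¹ ^ t / (L.choose t : ENNReal)) := by
        apply Finset.sum_le_sum
        intro j _
        rw [ENNReal.le_div_iff_mul_le (Or.inl hCL0) (Or.inl hCLtop)]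
        rw [mul_comm]
        exact hbound j
    _ = (K : ENNReal) *
          ((R.choose t : ENNReal) * ((K : ENNReal))⁻¹ ^ t / (L.choose t : ENNReal)) := by
        rw [Finset.sum_const, Finset.card_univ, Fintype.card_fin, nsmul_eq_mul]
    _ ≤ ENNReal.ofReal ((R : ℝ) *
          Real.exp (-(1/4) * min lam (r : ℝ) * Real.log lam)) := by
        have hfin : (K : ENNReal) *
            ((R.choose t : ENNReal) * ((K : ENNReal))⁻¹ ^ t / (L.choose t : ENNReal)) ≠ ⊤ := by
          apply ENNReal.mul_ne_top (ENNReal.natCast_ne_top _)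
          exact (ENNReal.div_lt_top (ENNReal.mul_ne_top (ENNReal.natCast_ne_top _)
            (ENNReal.pow_ne_top (ENNReal.inv_ne_top.2 (by exact_mod_cast hK0.ne')))) hCL0).ne
        rw [ENNReal.le_ofReal_iff_toReal_le hfin (by positivity)]
        have htoreal : ((K : ENNReal) *
            ((R.choose t : ENNReal) * ((K : ENNReal))⁻¹ ^ t / (L.choose t : ENNReal))).toReal
            = (K : ℝ) * ((R.choose t : ℝ) * ((K : ℝ)⁻¹) ^ t / (L.choose t : ℝ)) := by
          rw [ENNReal.toReal_mul, ENNReal.toReal_div, ENNReal.toReal_mul,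
            ENNReal.toReal_pow, ENNReal.toReal_inv]
          simp
        rw [htoreal]
        have := RwiseAux.real_key R K L r t lam hR1 hKR hr1 hL3 hlam hlamL htdef
        calc (K : ℝ) * ((R.choose t : ℝ) * ((K : ℝ)⁻¹) ^ t / (L.choose t : ℝ))
            = (K : ℝ) * (R.choose t) * ((K : ℝ)⁻¹) ^ t / (L.choose t) := by ring
          _ ≤ (R : ℝ) * Real.exp (-(1/4) * min lam (r : ℝ) * Real.log lam) := this
end

section
/- Let Γ : {0,1}^s × [w] → [M] satisfy: for every f : [M] → [0,1] and for Y_i = Γ(U,i) with U uniform, P(Σ_{i≤w} f(Y_i) > μγ) ≤ exp(-c·μγ·log min(γ, γ₀)) for all γ > 2, where μ = w·E_{X~Unif[M]} f(X), and each Y_i is marginally uniform (a γ₀-strong sampler with γ₀ ≥ exp(ln² w)). Then there is a universal constant C such that for every g : [M] → ℝ₊ with doubly-exponential tails P_{X~Unif[M]}(g(X) > λ) ≤ exp(-e^λ), we have P(Σ_{i≤w} g(Y_i) > C·w) ≤ exp(-Ω(w)). -/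
open Real

open Finset

private lemma count_eq_filter {α : Type*} [Fintype α] (q : α → Prop) [DecidablePred q] :
    Nat.card {a // q a} = (Finset.univ.filter q).card := by
  simp [Nat.card_eq_fintype_card, Fintype.card_subtype]

private lemma count_mono' {α : Type*} [Fintype α] {p q : α → Prop} (h : ∀ a, p a → q a) :
    (Nat.card {a // p a} : ℝ) ≤ (Nat.card {a // q a} : ℝ) := by
  classical
  rw [count_eq_filter, count_eq_filter]
  exact_mod_cast Finset.card_le_card (fun a ha => by
    simp only [Finset.mem_filter, Finset.mem_univ, true_and] at ha ⊢; exact h a ha)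

private lemma count_le_add₂ {α : Type*} [Fintype α] {p q r : α → Prop} (h : ∀ a, p a → q a ∨ r a) :
    (Nat.card {a // p a} : ℝ) ≤ (Nat.card {a // q a} : ℝ) + (Nat.card {a // r a} : ℝ) := by
  classical
  rw [count_eq_filter, count_eq_filter, count_eq_filter]
  have hsub : Finset.univ.filter p ⊆ (Finset.univ.filter q) ∪ (Finset.univ.filter r) := by
    intro a ha
    simp only [Finset.mem_filter, Finset.mem_univ, true_and, Finset.mem_union] at ha ⊢
    exact h a ha
  calc ((Finset.univ.filter p).card : ℝ)
      ≤ (((Finset.univ.filter q) ∪ (Finset.univ.filter r)).card : ℝ) := by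
        exact_mod_cast Finset.card_le_card hsub
    _ ≤ _ := by exact_mod_cast Finset.card_union_le _ _

private lemma count_le_sum {α ι : Type*} [Fintype α] (p : α → Prop) (t : Finset ι) (B : ι → α → Prop)
    (h : ∀ a, p a → ∃ k ∈ t, B k a) :
    (Nat.card {a // p a} : ℝ) ≤ ∑ k ∈ t, (Nat.card {a // B k a} : ℝ) := by
  classical
  simp only [count_eq_filter]
  have hsub : Finset.univ.filter p ⊆ t.biUnion (fun k => Finset.univ.filter (B k)) := by
    intro a ha
    simp only [Finset.mem_filter, Finset.mem_univ, true_and] at ha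
    obtain ⟨k, hk, hB⟩ := h a ha
    simp only [Finset.mem_biUnion, Finset.mem_filter, Finset.mem_univ, true_and]
    exact ⟨k, hk, hB⟩
  calc ((Finset.univ.filter p).card : ℝ)
      ≤ ((t.biUnion (fun k => Finset.univ.filter (B k))).card : ℝ) := by
        exact_mod_cast Finset.card_le_card hsub
    _ ≤ ∑ k ∈ t, ((Finset.univ.filter (B k)).card : ℝ) := by
        exact_mod_cast Finset.card_biUnion_le

private lemma geom_half_le_two (n : ℕ) : ∑ k ∈ Finset.range n, ((1:ℝ)/2)^k ≤ 2 := by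
  rw [geom_sum_eq (by norm_num)]
  have h : (0:ℝ) ≤ (1/2:ℝ)^n := by positivity
  rw [div_le_iff_of_neg (by norm_num)]; nlinarith

private lemma dyadic_decomp (y : ℝ) :
    ∀ K : ℕ, y ≤ 2^(K+1) * 4 →
      y ≤ 4 + ∑ k ∈ Finset.range (K+1), 2^k * 4 * (if (4:ℝ)*2^k < y then 1 else 0) := by
  intro K
  induction K with
  | zero =>
    intro hy
    rw [Finset.sum_range_one]
    norm_num at hy ⊢
    split <;> nlinarith
  | succ n ih =>
    intro hy
    by_cases h : y ≤ 2^(n+1) * 4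
    · have := ih h
      rw [Finset.sum_range_succ]
      have hterm : (0:ℝ) ≤ 2^(n+1) * 4 * (if (4:ℝ)*2^(n+1) < y then 1 else 0) := by
        split <;> positivity
      linarith
    · push_neg at h
      have hall : ∀ k ∈ Finset.range (n+2), (2:ℝ)^k * 4 * (if (4:ℝ)*2^k < y then 1 else 0) = 2^k * 4 := by
        intro k hk
        rw [if_pos, mul_one]
        have hk' : k ≤ n + 1 := by have := Finset.mem_range.mp hk; omega
        have hkle : (2:ℝ)^k ≤ 2^(n+1) := by
          apply pow_le_pow_right₀ (by norm_num) hk'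
        nlinarith
      rw [Finset.sum_congr rfl hall]
      have hgeo : ∑ k ∈ Finset.range (n+2), (2:ℝ)^k * 4 = (2^(n+2) - 1) * 4 := by
        rw [← Finset.sum_mul, geom_sum_eq (by norm_num)]
        norm_num
      rw [hgeo]; nlinarith [pow_pos (by norm_num : (0:ℝ) < 2) (n+2)]

private lemma fiber_count {s w M : ℕ} (Γ : (Fin s → Bool) → Fin w → Fin M)
    (hunif : ∀ (i : Fin w) (x : Fin M), (Nat.card {u : Fin s → Bool // Γ u i = x} : ℝ) * M = 2 ^ s)
    (i : Fin w) (P : Fin M → Prop) [DecidablePred P] :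
    (Nat.card {u : Fin s → Bool // P (Γ u i)} : ℝ) * M = (Nat.card {x : Fin M // P x} : ℝ) * 2 ^ s := by
  classical
  rw [count_eq_filter, count_eq_filter]
  rw [Finset.card_eq_sum_card_fiberwise (f := fun u => Γ u i) (t := Finset.univ.filter P)
    (fun u hu => by simpa using hu)]
  rw [Nat.cast_sum, Finset.sum_mul]
  have hrhs : ((Finset.univ.filter P).card : ℝ) * 2 ^ s = ∑ _x ∈ Finset.univ.filter P, (2:ℝ)^s := by
    rw [Finset.sum_const, nsmul_eq_mul]
  rw [hrhs]
  refine Finset.sum_congr rfl fun x hx => ?_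
  have hPx : P x := (Finset.mem_filter.mp hx).2
  have hfib : (Finset.univ.filter (fun u => P (Γ u i))).filter (fun u => Γ u i = x)
      = Finset.univ.filter (fun u => Γ u i = x) := by
    ext u
    simp only [Finset.mem_filter, Finset.mem_univ, true_and]
    constructor
    · rintro ⟨-, h⟩; exact h
    · intro h; exact ⟨h ▸ hPx, h⟩
  rw [hfib]
  have h4 := hunif i x
  rw [count_eq_filter] at h4
  exact h4

set_option maxHeartbeats 1000000 in
/-- A `γ₀`-strong sampler (with `γ₀ ≥ exp(ln² w)`) applied to a non-negative test
function with doubly-exponential tails: the sum of the sampled values exceeds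
`C w` with probability at most `exp(-Ω(w))` over the seed. Probabilities over
the seed space `{0,1}^s` and the universe `[M]` are expressed by counting. -/
theorem strong_sampler_handles_doubly_exponential_tails (c : ℝ) (hc : 0 < c) :
    ∃ C c' : ℝ, 0 < C ∧ 0 < c' ∧
      ∀ (s w M : ℕ), 0 < M → 0 < w →
        ∀ γ₀ : ℝ, Real.exp (Real.log w ^ 2) ≤ γ₀ →
        ∀ Γ : (Fin s → Bool) → Fin w → Fin M,
          -- each sample is marginally uniform on [M]
          (∀ (i : Fin w) (x : Fin M),
            (Nat.card {u : Fin s → Bool // Γ u i = x} : ℝ) * M = 2 ^ s) →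
          -- Chernoff-type strong-sampler bound for [0,1]-valued test functions
          (∀ f : Fin M → ℝ, (∀ x, 0 ≤ f x ∧ f x ≤ 1) →
            ∀ γ : ℝ, 2 < γ →
              (Nat.card {u : Fin s → Bool //
                  (w : ℝ) * ((∑ x, f x) / M) * γ < ∑ i, f (Γ u i)} : ℝ) / 2 ^ s ≤
                Real.exp (-c * ((w : ℝ) * ((∑ x, f x) / M)) * γ *
                  Real.log (min γ γ₀))) →
          -- conclusion: for every g ≥ 0 with doubly-exponential tails
          ∀ g : Fin M → ℝ, (∀ x, 0 ≤ g x) →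
            (∀ lam : ℝ, 0 ≤ lam →
              (Nat.card {x : Fin M // lam < g x} : ℝ) / M ≤
                Real.exp (-Real.exp lam)) →
            (Nat.card {u : Fin s → Bool // C * w < ∑ i, g (Γ u i)} : ℝ) / 2 ^ s ≤
              Real.exp (-c' * w) := by
  classical
  refine ⟨4 + 8*(6/c + 6), 1/2, by positivity, by norm_num, ?_⟩
  intro s w M hM hw γ₀ hγ₀ Γ hunif hcher g hg htail
  set c₀ : ℝ := 6/c + 6 with hc₀def
  set C : ℝ := 4 + 8*c₀ with hCdef
  have hc₀6 : 6 ≤ c₀ := by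
    have : 0 < 6/c := by positivity
    simp only [hc₀def]; linarith
  have hC52 : 52 ≤ C := by simp only [hCdef]; linarith
  have h2s : (0:ℝ) < 2^s := by positivity
  have hMR : (0:ℝ) < M := by exact_mod_cast hM
  have hwR : (1:ℝ) ≤ w := by exact_mod_cast hw
  -- marginal union bound: for any threshold t ≥ 0
  have hmarg : ∀ t : ℝ, 0 ≤ t →
      (Nat.card {u : Fin s → Bool // ∃ i, t < g (Γ u i)} : ℝ) / 2^s
        ≤ w * Real.exp (-Real.exp t) := by
    intro t ht
    have h1 : (Nat.card {u : Fin s → Bool // ∃ i, t < g (Γ u i)} : ℝ)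
        ≤ ∑ i : Fin w, (Nat.card {u : Fin s → Bool // t < g (Γ u i)} : ℝ) := by
      apply count_le_sum _ Finset.univ (fun i u => t < g (Γ u i))
      intro u hu
      obtain ⟨i, hi⟩ := hu
      exact ⟨i, Finset.mem_univ i, hi⟩
    have h2 : ∀ i : Fin w,
        (Nat.card {u : Fin s → Bool // t < g (Γ u i)} : ℝ) / 2^s ≤ Real.exp (-Real.exp t) := by
      intro i
      have hf := fiber_count Γ hunif i (fun x => t < g x)
      have ht' := htail t ht
      have heq : (Nat.card {u : Fin s → Bool // t < g (Γ u i)} : ℝ) / 2^s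
          = (Nat.card {x : Fin M // t < g x} : ℝ) / M := by
        rw [div_eq_div_iff h2s.ne' hMR.ne']
        linarith [hf]
      rw [heq]; exact ht'
    calc (Nat.card {u : Fin s → Bool // ∃ i, t < g (Γ u i)} : ℝ) / 2^s
        ≤ (∑ i : Fin w, (Nat.card {u : Fin s → Bool // t < g (Γ u i)} : ℝ)) / 2^s := by
          gcongr
      _ = ∑ i : Fin w, (Nat.card {u : Fin s → Bool // t < g (Γ u i)} : ℝ) / 2^s := by
          rw [Finset.sum_div]
      _ ≤ ∑ _i : Fin w, Real.exp (-Real.exp t) := Finset.sum_le_sum (fun i _ => h2 i)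
      _ = w * Real.exp (-Real.exp t) := by
          rw [Finset.sum_const, Finset.card_univ, Fintype.card_fin, nsmul_eq_mul]
  by_cases hw8 : w < 8
  · -- small w: trivial union bound at threshold C
    have hwle : (w:ℝ) ≤ 7 := by exact_mod_cast Nat.lt_succ_iff.mp hw8
    have himp : ∀ u : Fin s → Bool, C * w < ∑ i, g (Γ u i) → ∃ i, C < g (Γ u i) := by
      intro u hu
      by_contra hno; push_neg at hno
      have : ∑ i, g (Γ u i) ≤ ∑ _i : Fin w, C := Finset.sum_le_sum (fun i _ => hno i)
      rw [Finset.sum_const, Finset.card_univ, Fintype.card_fin, nsmul_eq_mul] at this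
      nlinarith
    have h1 := count_mono' himp
    have h2 := hmarg C (by linarith)
    have h3 : (Nat.card {u : Fin s → Bool // C * w < ∑ i, g (Γ u i)} : ℝ) / 2^s
        ≤ w * Real.exp (-Real.exp C) := by
      refine le_trans ?_ h2
      gcongr
    refine h3.trans ?_
    have hexpC : (53:ℝ) ≤ Real.exp C := by
      have := Real.add_one_le_exp C; linarith
    have e1 : Real.exp (-Real.exp C) ≤ Real.exp (-53) := by
      rw [Real.exp_le_exp]; linarith
    have e2 : (7:ℝ) * Real.exp (-53) ≤ Real.exp (-4) := by
      rw [show (-53:ℝ) = -4 + -49 by norm_num, Real.exp_add]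
      have h49 : (50:ℝ) ≤ Real.exp 49 := by have := Real.add_one_le_exp (49:ℝ); linarith
      have h49' : Real.exp (-49:ℝ) ≤ 1/50 := by
        rw [Real.exp_neg, inv_le_comm₀ (by positivity) (by norm_num)]
        linarith
      nlinarith [Real.exp_pos (-4:ℝ)]
    have e3 : Real.exp (-4:ℝ) ≤ Real.exp (-(1/2) * w) := by
      rw [Real.exp_le_exp]; nlinarith
    calc (w:ℝ) * Real.exp (-Real.exp C) ≤ 7 * Real.exp (-53) := by
          nlinarith [Real.exp_pos (-Real.exp C), Real.exp_pos (-53:ℝ)]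
      _ ≤ Real.exp (-4) := e2
      _ ≤ Real.exp (-(1/2) * w) := e3
  · -- large w

    push_neg at hw8
    have hw8' : (8:ℝ) ≤ w := by exact_mod_cast hw8
    have hwpos : (0:ℝ) < w := by linarith
    have hlogw2 : 2 ≤ Real.log w := by
      rw [Real.le_log_iff_exp_le hwpos]
      have hexp2 : Real.exp 2 = Real.exp 1 * Real.exp 1 := by
        rw [← Real.exp_add]; norm_num
      nlinarith [Real.exp_one_lt_d9, Real.exp_pos 1]
    set L : ℝ := Real.log w with hLdef
    set K : ℕ := Nat.log 2 ⌊L⌋₊ with hKdef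
    have hfloor1 : 1 ≤ ⌊L⌋₊ := Nat.le_floor (by exact_mod_cast (by linarith : (1:ℝ) ≤ L))
    have h2K : (2:ℝ)^K ≤ L := by
      have h1 : (2:ℕ)^K ≤ ⌊L⌋₊ := Nat.pow_log_le_self 2 (by omega)
      have h2 : ((2:ℕ)^K : ℝ) ≤ (⌊L⌋₊ : ℝ) := by exact_mod_cast h1
      push_cast at h2
      linarith [Nat.floor_le (by linarith : (0:ℝ) ≤ L)]
    have hK2 : L ≤ 2^(K+1) := by
      have h1 : ⌊L⌋₊ < 2^(K+1) := Nat.lt_pow_succ_log_self (by norm_num) _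
      have h1' : (⌊L⌋₊ : ℝ) + 1 ≤ ((2:ℕ)^(K+1) : ℝ) := by exact_mod_cast h1
      push_cast at h1'
      linarith [Nat.lt_floor_add_one L]
    have hKcast : (K:ℝ) ≤ w := by
      have hk2k : (K:ℝ) < 2^K := by exact_mod_cast (Nat.lt_two_pow_self (n := K))
      have hLw : L ≤ w := Real.log_le_self (by positivity)
      linarith
    set Lam : ℝ := Real.log (w+1) + 1 with hLamdef
    have hLam0 : (0:ℝ) ≤ Lam := by
      have : (0:ℝ) ≤ Real.log (w+1) := Real.log_nonneg (by linarith)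
      linarith
    have h2K1 : (2:ℝ) ≤ 2^(K+1) := by
      calc (2:ℝ) = 2^1 := (pow_one 2).symm
        _ ≤ 2^(K+1) := pow_le_pow_right₀ one_le_two (by omega)
    have hLam_le : Lam ≤ 2^(K+1) * 4 := by
      have hlw1 : Real.log (w+1) ≤ L + 1 := by
        have h1 : Real.log (w+1) ≤ Real.log (2*w) := Real.log_le_log (by linarith) (by linarith)
        rw [Real.log_mul (by norm_num) (by positivity)] at h1
        have hl2 : Real.log 2 ≤ 1 := by
          rw [Real.log_le_iff_le_exp (by norm_num)]
          nlinarith [Real.exp_one_gt_d9]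
        linarith
      nlinarith [hK2, h2K1]
    set f : ℕ → Fin M → ℝ := fun k x => if (4:ℝ)*2^k < g x then 1 else 0 with hfdef
    have hf01 : ∀ k x, 0 ≤ f k x ∧ f k x ≤ 1 := by
      intro k x; simp only [hfdef]; split <;> norm_num
    have hfnonneg : ∀ k y, 0 ≤ f k y := fun k y => (hf01 k y).1
    have hsumf : ∀ k : ℕ, ∑ x, f k x = (Nat.card {x : Fin M // (4:ℝ)*2^k < g x} : ℝ) := by
      intro k
      rw [count_eq_filter]
      simp only [hfdef]
      rw [Finset.sum_boole]
    set B : ℕ → (Fin s → Bool) → Prop := fun k u => c₀/4^k * w < ∑ i, f k (Γ u i) with hBdef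
    have hBbound : ∀ k : ℕ, k ≤ K → (Nat.card {u : Fin s → Bool // B k u} : ℝ) / 2^s
        ≤ Real.exp (-(6:ℝ)*w) := by
      intro k hkK
      obtain ⟨N, hNcard⟩ : ∃ n : ℕ, Nat.card {x : Fin M // (4:ℝ)*2^k < g x} = n := ⟨_, rfl⟩
      have h4kpos : (0:ℝ) < 4^k := by positivity
      have htailk := htail ((4:ℝ)*2^k) (by positivity)
      rw [hNcard] at htailk
      by_cases hN0 : N = 0
      · have hempty : ∀ u : Fin s → Bool, ¬ B k u := by
          intro u hBu
          have hfx : ∀ y : Fin M, f k y = 0 := by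
            intro y
            simp only [hfdef]
            rw [if_neg]
            intro hy
            have hpos : 0 < N := by
              rw [← hNcard, count_eq_filter, Finset.card_pos]
              exact ⟨y, by simp [hy]⟩
            omega
          have hz : ∑ i, f k (Γ u i) = 0 := Finset.sum_eq_zero (fun i _ => hfx _)
          simp only [hBdef] at hBu
          rw [hz] at hBu
          have : (0:ℝ) < c₀/4^k*w := by positivity
          linarith
        have hzero : Nat.card {u : Fin s → Bool // B k u} = 0 := by
          rw [count_eq_filter]
          simp only [Finset.card_eq_zero, Finset.filter_eq_empty_iff]
          intro u _; exact hempty u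
        rw [hzero]
        simp only [Nat.cast_zero, zero_div]
        positivity
      · have hN1 : (1:ℝ) ≤ N := by exact_mod_cast Nat.one_le_iff_ne_zero.mpr hN0
        have hNpos : (0:ℝ) < N := by linarith
        have hNM : (N:ℝ) ≤ M * Real.exp (-Real.exp ((4:ℝ)*2^k)) := by
          rw [div_le_iff₀ hMR] at htailk
          linarith [htailk]
        set X : ℝ := Real.exp ((4:ℝ)*2^k) with hXdef
        have hXpos : 0 < X := Real.exp_pos _
        have hEXpos : (0:ℝ) < Real.exp X := Real.exp_pos _
        have hMN : Real.exp X * N ≤ M := by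
          have h1 : (N:ℝ)/M ≤ 1/Real.exp X := by
            rw [one_div, ← Real.exp_neg]
            exact htailk
          rw [div_le_div_iff₀ hMR hEXpos] at h1
          nlinarith
        set γ : ℝ := c₀ * M / (4^k * N) with hγdef
        have hγpos : 0 < γ := by
          rw [hγdef]
          apply div_pos (by nlinarith) (by nlinarith)
        have hγlb : Real.exp X / 4^k ≤ γ := by
          rw [hγdef, div_le_div_iff₀ h4kpos (by nlinarith)]
          nlinarith [mul_le_mul_of_nonneg_right hMN h4kpos.le,
            mul_nonneg hMR.le h4kpos.le]
        have hk2k : (k:ℝ) < 2^k := by exact_mod_cast (Nat.lt_two_pow_self (n := k))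
        have h2kpos : (0:ℝ) < 2^k := by positivity
        have h44 : (4:ℝ)^k = 2^k * 2^k := by rw [← mul_pow]; norm_num
        have hlogγ : (4:ℝ)^k ≤ Real.log γ := by
          have h1 : Real.log (Real.exp X/4^k) ≤ Real.log γ := Real.log_le_log (by positivity) hγlb
          rw [Real.log_div hEXpos.ne' (by positivity), Real.log_exp, Real.log_pow] at h1
          have hl4 : Real.log 4 ≤ 2 := by
            rw [Real.log_le_iff_le_exp (by norm_num)]
            have hexp2 : Real.exp 2 = Real.exp 1 * Real.exp 1 := by
              rw [← Real.exp_add]; norm_num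
            nlinarith [Real.exp_one_gt_d9, Real.exp_pos 1]
          have h2k2 : ((2:ℝ)*2^k+1)^2 ≤ X := by
            rw [hXdef]
            have ha := Real.add_one_le_exp ((2:ℝ)*2^k)
            have hb : Real.exp ((2:ℝ)*2^k) * Real.exp ((2:ℝ)*2^k) = Real.exp ((4:ℝ)*2^k) := by
              rw [← Real.exp_add]; ring_nf
            calc ((2:ℝ)*2^k+1)^2 = ((2:ℝ)*2^k+1)*((2:ℝ)*2^k+1) := by ring
              _ ≤ Real.exp ((2:ℝ)*2^k) * Real.exp ((2:ℝ)*2^k) :=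
                  mul_le_mul ha ha (by positivity) (Real.exp_pos _).le
              _ = Real.exp ((4:ℝ)*2^k) := hb
          have e1 : (k:ℝ)*Real.log 4 ≤ k*2 :=
            mul_le_mul_of_nonneg_left hl4 (Nat.cast_nonneg k)
          have hsq : ((2:ℝ)*2^k+1)^2 = 4*((2:ℝ)^k*2^k)+4*2^k+1 := by ring
          have haa : (0:ℝ) ≤ (2:ℝ)^k*2^k := by positivity
          linarith [h1, h2k2, hsq, h44, hk2k, h2kpos, e1, haa]
        have hγ2 : 2 < γ := by
          have h1 : Real.exp ((4:ℝ)^k) ≤ γ := by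
            rw [← Real.exp_log hγpos]
            exact Real.exp_le_exp.mpr hlogγ
          have h3 : (1:ℝ) ≤ 4^k := one_le_pow₀ (by norm_num)
          have h4 : Real.exp 1 ≤ Real.exp ((4:ℝ)^k) := Real.exp_le_exp.mpr h3
          linarith [Real.exp_one_gt_d9]
        have hcher' := hcher (f k) (fun x => hf01 k x) γ hγ2
        have hsumfN : ∑ x, f k x = (N:ℝ) := by rw [hsumf k, hNcard]
        have hμγ : (w : ℝ) * ((∑ x, f k x) / M) * γ = c₀/4^k * w := by
          rw [hsumfN, hγdef]
          field_simp
        rw [hμγ] at hcher'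
        have hlogγ₀ : (4:ℝ)^k ≤ Real.log γ₀ := by
          have h1 : L^2 ≤ Real.log γ₀ := by
            have h := Real.log_le_log (Real.exp_pos _) hγ₀
            rwa [Real.log_exp] at h
          have h2kK : (2:ℝ)^k ≤ 2^K := pow_le_pow_right₀ one_le_two hkK
          have h2kL : (2:ℝ)^k ≤ L := le_trans h2kK h2K
          have h4L : (4:ℝ)^k ≤ L^2 := by
            rw [h44, pow_two]
            exact mul_le_mul h2kL h2kL h2kpos.le (by linarith)
          linarith
        have hmin : (4:ℝ)^k ≤ Real.log (min γ γ₀) := by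
          rcases min_choice γ γ₀ with h | h <;> rw [h]
          · exact hlogγ
          · exact hlogγ₀
        have hexpb : Real.exp (-c * ((w:ℝ) * ((∑ x, f k x)/M)) * γ * Real.log (min γ γ₀))
            ≤ Real.exp (-(6:ℝ)*w) := by
          rw [Real.exp_le_exp]
          have hbase : (0:ℝ) ≤ c * (c₀/4^k*w) := by positivity
          have h6cc : (6:ℝ) ≤ c*c₀ := by
            have hx : c*c₀ = 6+6*c := by
              rw [hc₀def]
              field_simp
            rw [hx]
            linarith
          have hstep : 6*(w:ℝ) ≤ c * (c₀/4^k*w) * Real.log (min γ γ₀) := by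
            calc (6:ℝ)*w ≤ (c*c₀)*w := mul_le_mul_of_nonneg_right h6cc hwpos.le
              _ = c * (c₀/4^k*w) * 4^k := by field_simp
              _ ≤ c * (c₀/4^k*w) * Real.log (min γ γ₀) :=
                  mul_le_mul_of_nonneg_left hmin hbase
          calc -c * ((w:ℝ) * ((∑ x, f k x)/M)) * γ * Real.log (min γ γ₀)
              = -(c * ((w:ℝ) * ((∑ x, f k x)/M) * γ) * Real.log (min γ γ₀)) := by ring
            _ = -(c * (c₀/4^k*w) * Real.log (min γ γ₀)) := by rw [hμγ]
            _ ≤ -(6*(w:ℝ)) := neg_le_neg hstep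
            _ = -(6:ℝ)*w := by ring
        simp only [hBdef]
        exact le_trans hcher' hexpb
    have hEimp : ∀ u : Fin s → Bool, C*w < ∑ i, g (Γ u i) →
        (∃ i, Lam < g (Γ u i)) ∨ (∃ k ∈ Finset.range (K+1), B k u) := by
      intro u hu
      by_contra hcon
      push_neg at hcon
      obtain ⟨hA, hB⟩ := hcon
      have hpt : ∀ i : Fin w, g (Γ u i) ≤ 4 + ∑ k ∈ Finset.range (K+1), 2^k*4 * f k (Γ u i) := by
        intro i
        have hd := dyadic_decomp (g (Γ u i)) K (le_trans (hA i) hLam_le)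
        simpa only [hfdef] using hd
      have hs1 : ∑ i, g (Γ u i)
          ≤ ∑ i : Fin w, (4 + ∑ k ∈ Finset.range (K+1), (2:ℝ)^k*4 * f k (Γ u i)) :=
        Finset.sum_le_sum (fun i _ => hpt i)
      have hs2 : ∑ i : Fin w, (4 + ∑ k ∈ Finset.range (K+1), (2:ℝ)^k*4 * f k (Γ u i))
          = 4*w + ∑ k ∈ Finset.range (K+1), (2:ℝ)^k*4 * (∑ i, f k (Γ u i)) := by
        rw [Finset.sum_add_distrib, Finset.sum_const, Finset.card_univ, Fintype.card_fin,
          nsmul_eq_mul, Finset.sum_comm]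
        congr 1
        · ring
        · refine Finset.sum_congr rfl fun k _ => ?_
          rw [Finset.mul_sum]
      have hs3 : ∑ k ∈ Finset.range (K+1), (2:ℝ)^k*4 * (∑ i, f k (Γ u i))
          ≤ ∑ k ∈ Finset.range (K+1), 4*c₀*w*((1:ℝ)/2)^k := by
        refine Finset.sum_le_sum fun k hk => ?_
        have hBk := hB k hk
        simp only [hBdef, not_lt] at hBk
        have h44 : (4:ℝ)^k = 2^k*2^k := by rw [← mul_pow]; norm_num
        have h2kpos : (0:ℝ) < 2^k := by positivity
        have heq : (2:ℝ)^k*4*(c₀/4^k*w) = 4*c₀*w*((1:ℝ)/2)^k := by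
          rw [div_pow, one_pow, h44]
          field_simp
        calc (2:ℝ)^k*4*(∑ i, f k (Γ u i)) ≤ 2^k*4*(c₀/4^k*w) := by
              apply mul_le_mul_of_nonneg_left hBk (by positivity)
          _ = 4*c₀*w*((1:ℝ)/2)^k := heq
      have hs4 : ∑ k ∈ Finset.range (K+1), 4*c₀*w*((1:ℝ)/2)^k ≤ 8*c₀*w := by
        rw [← Finset.mul_sum]
        have hgs := geom_half_le_two (K+1)
        calc 4*c₀*(w:ℝ) * ∑ k ∈ Finset.range (K+1), ((1:ℝ)/2)^k
            ≤ 4*c₀*(w:ℝ) * 2 := mul_le_mul_of_nonneg_left hgs (by positivity)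
          _ = 8*c₀*w := by ring
      have hCw : C*w = 4*w + 8*c₀*w := by rw [hCdef]; ring
      rw [hs2] at hs1
      have h9 := add_le_add_right (hs3.trans hs4) (4*(w:ℝ))
      have h10 : ∑ i, g (Γ u i) ≤ C*w := by
        rw [hCw]
        exact hs1.trans h9
      exact absurd hu (not_lt.mpr h10)
    have hfinal : Real.exp (-(w:ℝ)) + Real.exp (-(2:ℝ)*w) ≤ Real.exp (-(1/2) * w) := by
      have ht5 : (5:ℝ) ≤ Real.exp ((1/2)*w) := by
        have := Real.add_one_le_exp ((1/2)*(w:ℝ)); linarith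
      have htpos : (0:ℝ) < Real.exp (-(1/2)*(w:ℝ)) := Real.exp_pos _
      have ht2 : Real.exp (-(1/2)*(w:ℝ)) ≤ 1/5 := by
        rw [show -(1/2)*(w:ℝ) = -((1/2)*(w:ℝ)) by ring, Real.exp_neg]
        calc (Real.exp ((1/2)*(w:ℝ)))⁻¹ ≤ 5⁻¹ :=
              inv_anti₀ (by norm_num) ht5
          _ = 1/5 := by norm_num
      have he1 : Real.exp (-(w:ℝ)) = Real.exp (-(1/2)*(w:ℝ)) * Real.exp (-(1/2)*(w:ℝ)) := by
        rw [← Real.exp_add]; ring_nf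
      have he2 : Real.exp (-(2:ℝ)*w) ≤ Real.exp (-(w:ℝ)) := by
        rw [Real.exp_le_exp]; linarith
      have hq : Real.exp (-(w:ℝ)) ≤ (1/5) * Real.exp (-(1/2)*(w:ℝ)) := by
        rw [he1]
        exact mul_le_mul_of_nonneg_right ht2 htpos.le
      linarith [hq, he2, htpos]
    have hwle_exp : (w:ℝ) ≤ Real.exp w := by
      linarith [Real.add_one_le_exp (w:ℝ)]
    have hAexp : (w:ℝ) - ((w:ℝ)+1)*Real.exp 1 ≤ -(w:ℝ) := by
      nlinarith [Real.exp_one_gt_d9]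
    have hKexp : ((K:ℝ)+1) ≤ Real.exp ((4:ℝ)*w) := by
      linarith [hKcast, Real.add_one_le_exp ((4:ℝ)*w), hwpos]
    have hAbd : (Nat.card {u : Fin s → Bool // ∃ i, Lam < g (Γ u i)} : ℝ)/2^s
        ≤ Real.exp (-(w:ℝ)) := by
      refine (hmarg Lam hLam0).trans ?_
      have hexpLam : Real.exp Lam = ((w:ℝ)+1) * Real.exp 1 := by
        rw [hLamdef, Real.exp_add, Real.exp_log (by positivity)]
      rw [hexpLam]
      calc (w:ℝ) * Real.exp (-(((w:ℝ)+1)*Real.exp 1))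
          ≤ Real.exp (w:ℝ) * Real.exp (-(((w:ℝ)+1)*Real.exp 1)) :=
            mul_le_mul_of_nonneg_right hwle_exp (Real.exp_pos _).le
        _ = Real.exp ((w:ℝ) - ((w:ℝ)+1)*Real.exp 1) := by rw [← Real.exp_add]; ring_nf
        _ ≤ Real.exp (-(w:ℝ)) := Real.exp_le_exp.mpr hAexp
    have hBtot : ∑ k ∈ Finset.range (K+1), (Nat.card {u : Fin s → Bool // B k u} : ℝ)/2^s
        ≤ Real.exp (-(2:ℝ)*w) := by
      calc ∑ k ∈ Finset.range (K+1), (Nat.card {u : Fin s → Bool // B k u} : ℝ)/2^s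
          ≤ ∑ _k ∈ Finset.range (K+1), Real.exp (-(6:ℝ)*w) :=
            Finset.sum_le_sum (fun k hk => hBbound k (by
              have := Finset.mem_range.mp hk; omega))
        _ = ((K:ℝ)+1) * Real.exp (-(6:ℝ)*w) := by
            rw [Finset.sum_const, Finset.card_range, nsmul_eq_mul]; push_cast; ring
        _ ≤ Real.exp ((4:ℝ)*w) * Real.exp (-(6:ℝ)*w) :=
            mul_le_mul_of_nonneg_right hKexp (Real.exp_pos _).le
        _ = Real.exp (-(2:ℝ)*w) := by rw [← Real.exp_add]; ring_nf
    have hcard := count_le_add₂ hEimp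
    have hcard2 := count_le_sum (fun u : Fin s → Bool => ∃ k ∈ Finset.range (K+1), B k u)
        (Finset.range (K+1)) B (fun u hu => hu)
    calc (Nat.card {u : Fin s → Bool // C * w < ∑ i, g (Γ u i)} : ℝ) / 2 ^ s
        ≤ ((Nat.card {u : Fin s → Bool // ∃ i, Lam < g (Γ u i)} : ℝ)
           + (Nat.card {u : Fin s → Bool // ∃ k ∈ Finset.range (K+1), B k u} : ℝ)) / 2^s := by
          gcongr
      _ = (Nat.card {u : Fin s → Bool // ∃ i, Lam < g (Γ u i)} : ℝ)/2^s
           + (Nat.card {u : Fin s → Bool // ∃ k ∈ Finset.range (K+1), B k u} : ℝ)/2^s := by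
          rw [add_div]
      _ ≤ Real.exp (-(w:ℝ))
           + ∑ k ∈ Finset.range (K+1), (Nat.card {u : Fin s → Bool // B k u} : ℝ)/2^s := by
          gcongr
          rw [← Finset.sum_div]
          gcongr
      _ ≤ Real.exp (-(w:ℝ)) + Real.exp (-(2:ℝ)*w) := by
          gcongr
      _ ≤ Real.exp (-(1/2) * w) := hfinal
end
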